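/- arXiv:1606.03045 — 2 statements merged into one kernel-verified Lean document; each statement's English description precedes it below -/
import Mathlib

section
/- Let a, A, ω > 0, K > 0, and let k be a nonnegative integer. Suppose at least one of the following holds: (a) Aω < K ≤ a²/4; (b) a²/4 ≤ K < a²/2 − Aω; (c) 4K > a² and Aω < a·√(4K − a²)/4. Then the equilibrium x* = (2k+1)π/ω of the controlled sunflower equation ẍ(t) + a·ẋ(t) + A·sin(ω·x(h(t))) = −K·[x(t) − (2k+1)π/ω] is globally asymptotically stable: every twice differentiable solution x satisfies x(t) → (2k+1)π/ω as t → ∞. -/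
open Filter MeasureTheory Real

open Filter MeasureTheory Real intervalIntegral Complex

noncomputable section

lemma II_of_bounded {E : Type*} [NormedAddCommGroup E] (f : ℝ → E)
    (hf : AEStronglyMeasurable f volume) (u v Bb : ℝ)
    (hb : ∀ s ∈ Set.uIcc u v, ‖f s‖ ≤ Bb) : IntervalIntegrable f volume u v := by
  rw [intervalIntegrable_iff]
  haveI : IsFiniteMeasure (volume.restrict (Set.uIoc u v)) := by
    constructor
    rw [Measure.restrict_apply_univ]
    exact measure_Ioc_lt_top
  apply MeasureTheory.Integrable.mono' (integrable_const Bb) hf.restrict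
  exact ae_restrict_of_forall_mem measurableSet_uIoc fun s hs => hb s (Set.uIoc_subset_uIcc hs)

lemma kernel_norm (α β d : ℝ) (hβ : 0 < β) (hd : 0 ≤ d) :
    ‖(Complex.exp (-(((α:ℂ) + β*Complex.I)*d)) - Complex.exp (-(((α:ℂ) - β*Complex.I)*d)))
      / (((α:ℂ) - β*Complex.I) - ((α:ℂ) + β*Complex.I))‖
      ≤ Real.exp (-(α*d)) * min d (1/β) := by
  have h1 : -(((α:ℂ) + β*Complex.I)*d) = (↑(-(α*d)) : ℂ) + (↑(-(β*d)) : ℝ) * Complex.I := by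
    push_cast; ring
  have h2 : -(((α:ℂ) - β*Complex.I)*d) = (↑(-(α*d)) : ℂ) + (↑(β*d) : ℝ) * Complex.I := by
    push_cast; ring
  have h3 : (((α:ℂ) - β*Complex.I) - ((α:ℂ) + β*Complex.I)) = -(2*β)*Complex.I := by
    push_cast; ring
  rw [h1, h2, h3, Complex.exp_add, Complex.exp_add, ← mul_sub]
  rw [norm_div, norm_mul]
  have hnum : ‖Complex.exp ((↑(-(β*d)) : ℝ) * Complex.I) - Complex.exp ((↑(β*d) : ℝ) * Complex.I)‖
      = 2 * |Real.sin (β*d)| := by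
    rw [Complex.exp_mul_I, Complex.exp_mul_I]
    have : Complex.cos (↑(-(β*d)):ℝ) + Complex.sin (↑(-(β*d)):ℝ) * Complex.I
        - (Complex.cos (↑(β*d):ℝ) + Complex.sin (↑(β*d):ℝ) * Complex.I)
        = (↑(-2 * Real.sin (β*d)) : ℝ) * Complex.I := by
      push_cast [Complex.ofReal_sin, Complex.ofReal_cos]
      rw [Complex.cos_neg, Complex.sin_neg]
      ring
    rw [this, norm_mul, Complex.norm_real, Complex.norm_I]
    simp [abs_mul]
  rw [hnum]
  have hexp : ‖Complex.exp ((↑(-(α*d)) : ℂ))‖ = Real.exp (-(α*d)) := by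
    simp [Complex.norm_exp]
  rw [hexp]
  have hden : ‖-(2*(β:ℂ)) * Complex.I‖ = 2*β := by
    rw [norm_mul, Complex.norm_I, mul_one, norm_neg]
    have : (2*(β:ℂ)) = ((2*β : ℝ) : ℂ) := by push_cast; ring
    rw [this, Complex.norm_real, Real.norm_eq_abs, abs_of_pos (by linarith)]
  rw [hden]
  have hsin : |Real.sin (β*d)| ≤ β * min d (1/β) := by
    rcases le_total d (1/β) with hcase | hcase
    · rw [min_eq_left hcase]
      calc |Real.sin (β*d)| ≤ |β*d| := Real.abs_sin_le_abs
        _ = β * d := abs_of_nonneg (by positivity)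
    · rw [min_eq_right hcase]
      calc |Real.sin (β*d)| ≤ 1 := Real.abs_sin_le_one _
        _ = β * (1/β) := by field_simp
  rw [div_le_iff₀ (by linarith : (0:ℝ) < 2*β)]
  have h0 : (0:ℝ) ≤ rexp (-(α*d)) := le_of_lt (Real.exp_pos _)
  nlinarith [mul_le_mul_of_nonneg_left hsin h0]

end

section IntBounds

lemma int_bound₁ (α u v : ℝ) (hα : 0 < α) (huv : u ≤ v) :
    (∫ s in u..v, Real.exp (-(α*(v-s))) * (v-s)) ≤ 1/α^2 := by
  have hd : ∀ s ∈ Set.uIcc u v,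
      HasDerivAt (fun s => Real.exp (-(α*(v-s))) * ((v-s)/α + 1/α^2))
        (Real.exp (-(α*(v-s))) * (v-s)) s := by
    intro s _
    have h1 : HasDerivAt (fun s : ℝ => -(α*(v-s))) α s := by
      simpa [Pi.neg_def] using ((hasDerivAt_id s).const_sub v).const_mul α |>.neg
    have h2 := h1.exp
    have h3 := (((hasDerivAt_id s).const_sub v).div_const α).add_const (1/α^2)
    have := h2.mul h3
    refine this.congr_deriv ?_
    simp only [id]
    field_simp
    ring
  have hint : IntervalIntegrable (fun s => Real.exp (-(α*(v-s))) * (v-s)) volume u v := by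
    apply Continuous.intervalIntegrable
    continuity
  have := intervalIntegral.integral_eq_sub_of_hasDerivAt hd hint
  rw [this]
  have e1 : Real.exp (-(α*(v-v))) * ((v-v)/α + 1/α^2) = 1/α^2 := by simp
  rw [e1]
  have h0 : (0:ℝ) ≤ Real.exp (-(α*(v-u))) * ((v-u)/α + 1/α^2) :=
    mul_nonneg (Real.exp_pos _).le
      (add_nonneg (div_nonneg (by linarith) hα.le) (by positivity))
  linarith

lemma int_bound₂ (α c u v : ℝ) (hα : 0 < α) (hc : 0 ≤ c) (huv : u ≤ v) :
    (∫ s in u..v, Real.exp (-(α*(v-s))) * c) ≤ c/α := by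
  have hd : ∀ s ∈ Set.uIcc u v,
      HasDerivAt (fun s => Real.exp (-(α*(v-s))) * (c/α))
        (Real.exp (-(α*(v-s))) * c) s := by
    intro s _
    have h1 : HasDerivAt (fun s : ℝ => -(α*(v-s))) α s := by
      simpa [Pi.neg_def] using ((hasDerivAt_id s).const_sub v).const_mul α |>.neg
    have h2 := h1.exp.mul_const (c/α)
    refine h2.congr_deriv ?_
    field_simp
  have hint : IntervalIntegrable (fun s => Real.exp (-(α*(v-s))) * c) volume u v := by
    apply Continuous.intervalIntegrable
    continuity
  rw [intervalIntegral.integral_eq_sub_of_hasDerivAt hd hint]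
  have e1 : Real.exp (-(α*(v-v))) * (c/α) = c/α := by simp
  rw [e1]
  have h0 : (0:ℝ) ≤ Real.exp (-(α*(v-u))) * (c/α) := by positivity
  linarith

lemma int_min_le₁ (α β u v : ℝ) (hα : 0 < α) (hβ : 0 < β) (huv : u ≤ v) :
    (∫ s in u..v, Real.exp (-(α*(v-s))) * min (v-s) (1/β)) ≤ 1/α^2 := by
  refine le_trans ?_ (int_bound₁ α u v hα huv)
  apply intervalIntegral.integral_mono_on huv
  · apply Continuous.intervalIntegrable; continuity
  · apply Continuous.intervalIntegrable; continuity
  · intro s hs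
    have : min (v-s) (1/β) ≤ v - s := min_le_left _ _
    have h0 : (0:ℝ) ≤ Real.exp (-(α*(v-s))) := le_of_lt (Real.exp_pos _)
    nlinarith

lemma int_min_le₂ (α β u v : ℝ) (hα : 0 < α) (hβ : 0 < β) (huv : u ≤ v) :
    (∫ s in u..v, Real.exp (-(α*(v-s))) * min (v-s) (1/β)) ≤ 1/(α*β) := by
  have : 1/(α*β) = (1/β)/α := by field_simp [mul_comm]
  rw [this]
  refine le_trans ?_ (int_bound₂ α (1/β) u v hα (by positivity) huv)
  apply intervalIntegral.integral_mono_on huv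
  · apply Continuous.intervalIntegrable; continuity
  · apply Continuous.intervalIntegrable; continuity
  · intro s hs
    have : min (v-s) (1/β) ≤ 1/β := min_le_right _ _
    have h0 : (0:ℝ) ≤ Real.exp (-(α*(v-s))) := le_of_lt (Real.exp_pos _)
    nlinarith

lemma lam_facts (α β : ℝ) (hβ : 0 < β) :
    ∃ lam1 lam2 : ℂ,
      lam1 + lam2 = 2*(α:ℂ) ∧
      lam1 * lam2 = (α:ℂ)^2 + (β:ℂ)^2 ∧
      lam2 - lam1 ≠ 0 ∧
      ‖lam2 - lam1‖ = 2*β ∧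
      (∀ t : ℝ, ‖Complex.exp (-(lam1 * t))‖ = Real.exp (-(α*t))) ∧
      (∀ t : ℝ, ‖Complex.exp (-(lam2 * t))‖ = Real.exp (-(α*t))) ∧
      (∀ d : ℝ, 0 ≤ d →
        ‖(Complex.exp (-(lam1*d)) - Complex.exp (-(lam2*d))) / (lam2 - lam1)‖
          ≤ Real.exp (-(α*d)) * min d (1/β)) := by
  refine ⟨(α:ℂ) + β*Complex.I, (α:ℂ) - β*Complex.I, by ring, ?_, ?_, ?_, ?_, ?_,
    fun d hd => kernel_norm α β d hβ hd⟩
  · have : Complex.I^2 = -1 := Complex.I_sq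
    ring_nf
    rw [this]
    ring
  · intro hcon
    have h2 : ((2*β:ℝ) : ℂ) * Complex.I
        = -((((α:ℂ) - β*Complex.I)) - ((α:ℂ) + β*Complex.I)) := by push_cast; ring
    rw [hcon, neg_zero] at h2
    rcases mul_eq_zero.1 h2 with hz | hz
    · have : (2*β : ℝ) = 0 := by exact_mod_cast hz
      linarith
    · exact Complex.I_ne_zero hz
  · have : ((α:ℂ) - β*Complex.I) - ((α:ℂ) + β*Complex.I) = -(2*β)*Complex.I := by ring
    rw [this, norm_mul, Complex.norm_I, mul_one, norm_neg]
    have h2 : (2*(β:ℂ)) = ((2*β : ℝ) : ℂ) := by push_cast; ring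
    rw [h2, Complex.norm_real, Real.norm_eq_abs, abs_of_pos (by linarith)]
  · intro t
    have : -(((α:ℂ) + β*Complex.I) * t) = ((-(α*t) : ℝ) : ℂ) + ((-(β*t) : ℝ) : ℂ)*Complex.I := by
      push_cast; ring
    rw [this, Complex.exp_add, norm_mul]
    simp [Complex.norm_exp]
  · intro t
    have : -(((α:ℂ) - β*Complex.I) * t) = ((-(α*t) : ℝ) : ℂ) + (((β*t) : ℝ) : ℂ)*Complex.I := by
      push_cast; ring
    rw [this, Complex.exp_add, norm_mul]
    simp [Complex.norm_exp]
open Filter MeasureTheory Real intervalIntegral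

noncomputable section AuxDefs

set_option maxHeartbeats 2000000 in
lemma aux_stab (t₀ α β ρ₁ ρ₂ C M : ℝ) (h y y' y'' F : ℝ → ℝ)
    (hα : 0 < α) (hβ : 0 < β) (hρ₁ : 0 ≤ ρ₁) (hρ₂ : 0 ≤ ρ₂) (hC : 0 ≤ C)
    (hL : (ρ₁ + ρ₂) * C < 1)
    (hy' : ∀ t, HasDerivAt y (y' t) t) (hy'' : ∀ t, HasDerivAt y' (y'' t) t)
    (hFmeas : Measurable F)
    (hF : ∀ t, t₀ ≤ t → |F t| ≤ ρ₁ * |y t| + ρ₂ * |y (h t)|)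
    (hhle : ∀ t, h t ≤ t) (hhtend : Tendsto h atTop atTop)
    (hM : ∀ t, t ≤ t₀ → |y t| ≤ M)
    (hODE : ∀ t, t₀ ≤ t → y'' t + (2*α) * y' t + (α^2 + β^2) * y t = F t)
    (hint : ∀ u v : ℝ, u ≤ v →
      (∫ s in u..v, Real.exp (-(α*(v-s))) * min (v-s) (1/β)) ≤ C) :
    Tendsto y atTop (nhds 0) := by
  obtain ⟨lam1, lam2, hsum, hprod, hne, hdnorm, hn1, hn2, hker⟩ := lam_facts α β hβ
  set g : ℝ → ℝ := fun d => Real.exp (-(α*d)) * min d (1/β) with hg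
  set Fc : ℝ → ℂ := fun s => (F s : ℂ) with hFc
  set ρ : ℝ := ρ₁ + ρ₂ with hρdef
  set L : ℝ := ρ * C with hLdef
  have hρ0 : 0 ≤ ρ := by positivity
  have hL0 : 0 ≤ L := by positivity
  have ycont : Continuous y := by
    rw [continuous_iff_continuousAt]; exact fun t => (hy' t).continuousAt
  have hM0 : 0 ≤ M := (abs_nonneg _).trans (hM t₀ le_rfl)
  -- boundedness of y on (-∞, T]
  have ybdd : ∀ T : ℝ, ∃ B : ℝ, 0 ≤ B ∧ ∀ s, s ≤ T → |y s| ≤ B := by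
    intro T
    rcases le_or_gt T t₀ with hT | hT
    · exact ⟨M, hM0, fun s hs => hM s (hs.trans hT)⟩
    · obtain ⟨sm, _, hmax⟩ := isCompact_Icc.exists_isMaxOn (Set.nonempty_Icc.2 hT.le)
        (ycont.abs.continuousOn (s := Set.Icc t₀ T))
      refine ⟨max M (|y sm|), le_trans hM0 (le_max_left _ _), fun s hs => ?_⟩
      rcases le_or_gt s t₀ with hs0 | hs0
      · exact (hM s hs0).trans (le_max_left _ _)
      · exact le_trans (hmax ⟨hs0.le, hs⟩) (le_max_right _ _)
  -- |F| bounded by ρ * (bound on y up to that time)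
  have hFb : ∀ s B, t₀ ≤ s → (∀ r, r ≤ s → |y r| ≤ B) → |F s| ≤ ρ * B := by
    intro s B hs hB
    calc |F s| ≤ ρ₁ * |y s| + ρ₂ * |y (h s)| := hF s hs
      _ ≤ ρ₁ * B + ρ₂ * B := by
          have h1 := hB s le_rfl
          have h2 := hB (h s) (hhle s)
          have := mul_le_mul_of_nonneg_left h1 hρ₁
          have := mul_le_mul_of_nonneg_left h2 hρ₂
          linarith
      _ = ρ * B := by rw [hρdef]; ring
  -- interval integrability of (continuous φ) * Fc
  have hprodII : ∀ (φ : ℝ → ℂ), Continuous φ → ∀ u v, t₀ ≤ u → u ≤ v →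
      IntervalIntegrable (fun s => φ s * Fc s) volume u v := by
    intro φ hφ u v hu huv
    obtain ⟨B, hB0, hB⟩ := ybdd v
    obtain ⟨sm, _, hmax⟩ := isCompact_Icc.exists_isMaxOn (Set.nonempty_Icc.2 huv)
      ((hφ.norm).continuousOn (s := Set.Icc u v))
    apply II_of_bounded _ (hφ.aestronglyMeasurable.mul
      ((Complex.measurable_ofReal.comp hFmeas).aestronglyMeasurable))
      u v (‖φ sm‖ * (ρ * B))
    intro s hs
    rw [Set.uIcc_of_le huv] at hs
    have h1 : ‖φ s‖ ≤ ‖φ sm‖ := hmax hs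
    have h2 : ‖Fc s‖ ≤ ρ * B := by
      rw [hFc]
      simp only [Complex.norm_real, Real.norm_eq_abs]
      exact hFb s B (hu.trans hs.1) (fun r hr => hB r (hr.trans hs.2))
    calc ‖φ s * Fc s‖ = ‖φ s‖ * ‖Fc s‖ := norm_mul _ _
      _ ≤ ‖φ sm‖ * (ρ * B) := by
          have := norm_nonneg (φ s)
          have := norm_nonneg (Fc s)
          nlinarith
  -- interval integrability of (continuous φ) * |F|
  have hprodIIR : ∀ (φ : ℝ → ℝ), Continuous φ → ∀ u v, t₀ ≤ u → u ≤ v →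
      IntervalIntegrable (fun s => φ s * |F s|) volume u v := by
    intro φ hφ u v hu huv
    obtain ⟨B, hB0, hB⟩ := ybdd v
    obtain ⟨sm, _, hmax⟩ := isCompact_Icc.exists_isMaxOn (Set.nonempty_Icc.2 huv)
      ((hφ.norm).continuousOn (s := Set.Icc u v))
    apply II_of_bounded _ (hφ.aestronglyMeasurable.mul
      (hFmeas.abs.aestronglyMeasurable))
      u v (‖φ sm‖ * (ρ * B))
    intro s hs
    rw [Set.uIcc_of_le huv] at hs
    have h1 : ‖φ s‖ ≤ ‖φ sm‖ := hmax hs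
    have h2 : |F s| ≤ ρ * B := hFb s B (hu.trans hs.1) (fun r hr => hB r (hr.trans hs.2))
    calc ‖φ s * |F s|‖ = ‖φ s‖ * |F s| := by
          rw [Real.norm_eq_abs, abs_mul, _root_.abs_abs, Real.norm_eq_abs]
      _ ≤ ‖φ sm‖ * (ρ * B) := by
          have := norm_nonneg (φ s)
          have := abs_nonneg (F s)
          nlinarith
  -- P and Q functions
  set Pf : ℝ → ℂ := fun t => Complex.exp (lam1 * t) * ((y' t : ℂ) + lam2 * (y t : ℂ)) with hPf
  set Qf : ℝ → ℂ := fun t => Complex.exp (lam2 * t) * ((y' t : ℂ) + lam1 * (y t : ℂ)) with hQf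
  have hexpd : ∀ (lam : ℂ) (s : ℝ), HasDerivAt (fun t : ℝ => Complex.exp (lam * t))
      (lam * Complex.exp (lam * s)) s := by
    intro lam s
    have h1 : HasDerivAt (fun t : ℝ => ((t : ℝ) : ℂ)) 1 s := by
      simpa using (hasDerivAt_id s).ofReal_comp
    have h2 := (h1.const_mul lam).cexp
    simpa [mul_comm] using h2
  have hODE' : ∀ s, t₀ ≤ s → F s = y'' s + 2*α*(y' s) + (α^2+β^2)*(y s) := by
    intro s hs; linarith [hODE s hs]
  have hPd : ∀ s, t₀ ≤ s → HasDerivAt Pf (Complex.exp (lam1 * s) * Fc s) s := by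
    intro s hs
    have d2 : HasDerivAt (fun t => ((y' t : ℂ) + lam2 * (y t : ℂ)))
        ((y'' s : ℂ) + lam2 * (y' s : ℂ)) s :=
      ((hy'' s).ofReal_comp).add (((hy' s).ofReal_comp).const_mul lam2)
    have hFceq : Fc s = (y'' s : ℂ) + 2*(α:ℂ)*(y' s : ℂ) + ((α:ℂ)^2 + (β:ℂ)^2)*(y s : ℂ) := by
      rw [hFc]
      simp only
      rw [hODE' s hs]
      push_cast
      ring
    have hd := (hexpd lam1 s).mul d2
    rw [hPf]
    refine hd.congr_deriv (Eq.symm ?_)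
    rw [hFceq]
    linear_combination (-(Complex.exp (lam1*s)) * ((y' s : ℂ))) * hsum
      + (-(Complex.exp (lam1*s)) * ((y s : ℂ))) * hprod
  have hQd : ∀ s, t₀ ≤ s → HasDerivAt Qf (Complex.exp (lam2 * s) * Fc s) s := by
    intro s hs
    have d2 : HasDerivAt (fun t => ((y' t : ℂ) + lam1 * (y t : ℂ)))
        ((y'' s : ℂ) + lam1 * (y' s : ℂ)) s :=
      ((hy'' s).ofReal_comp).add (((hy' s).ofReal_comp).const_mul lam1)
    have hFceq : Fc s = (y'' s : ℂ) + 2*(α:ℂ)*(y' s : ℂ) + ((α:ℂ)^2 + (β:ℂ)^2)*(y s : ℂ) := by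
      rw [hFc]
      simp only
      rw [hODE' s hs]
      push_cast
      ring
    have hd := (hexpd lam2 s).mul d2
    rw [hQf]
    refine hd.congr_deriv (Eq.symm ?_)
    rw [hFceq]
    linear_combination (-(Complex.exp (lam2*s)) * ((y' s : ℂ))) * hsum
      + (-(Complex.exp (lam2*s)) * ((y s : ℂ))) * hprod
  have hexpcont : ∀ lam : ℂ, Continuous (fun s : ℝ => Complex.exp (lam * s)) :=
    fun lam => Complex.continuous_exp.comp (continuous_const.mul Complex.continuous_ofReal)
  have hPint : ∀ t, t₀ ≤ t → Pf t = Pf t₀ + ∫ s in t₀..t, Complex.exp (lam1 * s) * Fc s := by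
    intro t ht
    have := intervalIntegral.integral_eq_sub_of_hasDerivAt (f := Pf)
      (f' := fun s => Complex.exp (lam1 * s) * Fc s)
      (fun s hs => hPd s (by rw [Set.uIcc_of_le ht] at hs; exact hs.1))
      (hprodII _ (hexpcont lam1) t₀ t le_rfl ht)
    rw [this]; ring
  have hQint : ∀ t, t₀ ≤ t → Qf t = Qf t₀ + ∫ s in t₀..t, Complex.exp (lam2 * s) * Fc s := by
    intro t ht
    have := intervalIntegral.integral_eq_sub_of_hasDerivAt (f := Qf)
      (f' := fun s => Complex.exp (lam2 * s) * Fc s)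
      (fun s hs => hQd s (by rw [Set.uIcc_of_le ht] at hs; exact hs.1))
      (hprodII _ (hexpcont lam2) t₀ t le_rfl ht)
    rw [this]; ring
  have hkercont : ∀ (lam : ℂ) (t : ℝ), Continuous (fun s : ℝ => Complex.exp (-(lam * ((t:ℝ) - s : ℝ)))) := by
    intro lam t
    apply Complex.continuous_exp.comp
    apply Continuous.neg
    exact continuous_const.mul (Complex.continuous_ofReal.comp (continuous_const.sub continuous_id))
  set Hc : ℝ → ℂ := fun t =>
    (Complex.exp (-(lam1*t)) * Pf t₀ - Complex.exp (-(lam2*t)) * Qf t₀) / (lam2 - lam1) with hHc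
  have hrep : ∀ t, t₀ ≤ t → (y t : ℂ) = Hc t + ∫ s in t₀..t,
      ((Complex.exp (-(lam1*((t - s : ℝ)))) - Complex.exp (-(lam2*((t - s : ℝ)))))/(lam2-lam1)) * Fc s := by
    intro t ht
    have e1 : Complex.exp (-(lam1*t)) * Pf t = (y' t : ℂ) + lam2 * (y t : ℂ) := by
      rw [hPf]
      simp only
      rw [← mul_assoc, ← Complex.exp_add]
      simp
    have e2 : Complex.exp (-(lam2*t)) * Qf t = (y' t : ℂ) + lam1 * (y t : ℂ) := by
      rw [hQf]
      simp only
      rw [← mul_assoc, ← Complex.exp_add]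
      simp
    have e3 : (lam2 - lam1) * (y t : ℂ)
        = Complex.exp (-(lam1*t)) * Pf t - Complex.exp (-(lam2*t)) * Qf t := by
      rw [e1, e2]; ring
    rw [hPint t ht, hQint t ht] at e3
    have e4 : Complex.exp (-(lam1*t)) * ∫ s in t₀..t, Complex.exp (lam1 * s) * Fc s
        = ∫ s in t₀..t, Complex.exp (-(lam1*((t - s : ℝ)))) * Fc s := by
      rw [← intervalIntegral.integral_const_mul]
      apply intervalIntegral.integral_congr
      intro s _
      beta_reduce
      rw [← mul_assoc, ← Complex.exp_add]
      congr 2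
      push_cast
      ring
    have e5 : Complex.exp (-(lam2*t)) * ∫ s in t₀..t, Complex.exp (lam2 * s) * Fc s
        = ∫ s in t₀..t, Complex.exp (-(lam2*((t - s : ℝ)))) * Fc s := by
      rw [← intervalIntegral.integral_const_mul]
      apply intervalIntegral.integral_congr
      intro s _
      beta_reduce
      rw [← mul_assoc, ← Complex.exp_add]
      congr 2
      push_cast
      ring
    have e6 : (∫ s in t₀..t, Complex.exp (-(lam1*((t - s : ℝ)))) * Fc s)
          - (∫ s in t₀..t, Complex.exp (-(lam2*((t - s : ℝ)))) * Fc s)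
        = ∫ s in t₀..t, (Complex.exp (-(lam1*((t - s : ℝ)))) - Complex.exp (-(lam2*((t - s : ℝ))))) * Fc s := by
      rw [← intervalIntegral.integral_sub (hprodII _ (hkercont lam1 t) t₀ t le_rfl ht)
        (hprodII _ (hkercont lam2 t) t₀ t le_rfl ht)]
      apply intervalIntegral.integral_congr
      intro s _
      beta_reduce
      ring
    have e9 : (∫ s in t₀..t,
        ((Complex.exp (-(lam1*((t - s : ℝ)))) - Complex.exp (-(lam2*((t - s : ℝ)))))/(lam2-lam1)) * Fc s)
        = (lam2-lam1)⁻¹ * ∫ s in t₀..t,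
          (Complex.exp (-(lam1*((t - s : ℝ)))) - Complex.exp (-(lam2*((t - s : ℝ))))) * Fc s := by
      rw [← intervalIntegral.integral_const_mul]
      apply intervalIntegral.integral_congr
      intro s _
      beta_reduce
      ring
    apply mul_left_cancel₀ hne
    rw [mul_add, e9, ← mul_assoc, mul_inv_cancel₀ hne, one_mul, hHc]
    simp only
    rw [mul_div_cancel₀ _ hne]
    rw [← e6, ← e4, ← e5]
    linear_combination e3
  have hgcont : Continuous g := by
    rw [hg]
    exact (Real.continuous_exp.comp (continuous_const.mul continuous_id).neg).mul
      (continuous_id.min continuous_const)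
  have hgtscont : ∀ t : ℝ, Continuous (fun s => g (t - s)) :=
    fun t => hgcont.comp (continuous_const.sub continuous_id)
  have hg0 : ∀ d, 0 ≤ d → 0 ≤ g d := by
    intro d hd
    rw [hg]
    simp only
    apply mul_nonneg (Real.exp_pos _).le
    exact le_min hd (by positivity)
  set C₀ : ℝ := (‖Pf t₀‖ + ‖Qf t₀‖) / (2*β) * Real.exp (-(α*t₀)) with hC₀def
  have hC₀0 : 0 ≤ C₀ := by positivity
  have hkerII : ∀ t, t₀ ≤ t → IntervalIntegrable
      (fun s => ((Complex.exp (-(lam1*((t - s : ℝ)))) - Complex.exp (-(lam2*((t - s : ℝ)))))/(lam2-lam1)) * Fc s)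
      volume t₀ t := by
    intro t ht
    apply hprodII _ _ t₀ t le_rfl ht
    exact ((hkercont lam1 t).sub (hkercont lam2 t)).div_const _
  have key0 : ∀ t, t₀ ≤ t →
      |y t| ≤ C₀ * Real.exp (-(α*(t-t₀))) + ∫ s in t₀..t, g (t-s) * |F s| := by
    intro t ht
    have hyabs : |y t| = ‖((y t : ℝ) : ℂ)‖ := by
      rw [Complex.norm_real, Real.norm_eq_abs]
    rw [hyabs, hrep t ht]
    refine le_trans (norm_add_le _ _) (add_le_add ?_ ?_)
    · rw [hHc]
      simp only
      rw [norm_div, hdnorm]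
      have hb : ‖Complex.exp (-(lam1*t)) * Pf t₀ - Complex.exp (-(lam2*t)) * Qf t₀‖
          ≤ Real.exp (-(α*t)) * (‖Pf t₀‖ + ‖Qf t₀‖) := by
        refine le_trans (norm_sub_le _ _) (le_of_eq ?_)
        have b1 : ‖Complex.exp (-(lam1*t)) * Pf t₀‖ = Real.exp (-(α*t)) * ‖Pf t₀‖ := by
          rw [norm_mul, hn1 t]
        have b2 : ‖Complex.exp (-(lam2*t)) * Qf t₀‖ = Real.exp (-(α*t)) * ‖Qf t₀‖ := by
          rw [norm_mul, hn2 t]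
        rw [b1, b2]
        ring
      have hexp2 : Real.exp (-(α*t₀)) * Real.exp (-(α*(t-t₀))) = Real.exp (-(α*t)) := by
        rw [← Real.exp_add]; congr 1; ring
      have heq : C₀ * Real.exp (-(α*(t-t₀)))
          = Real.exp (-(α*t)) * (‖Pf t₀‖ + ‖Qf t₀‖) / (2*β) := by
        rw [hC₀def, ← hexp2]; ring
      rw [heq]
      gcongr
    · refine le_trans (intervalIntegral.norm_integral_le_integral_norm ht) ?_
      apply intervalIntegral.integral_mono_on ht
      · exact (hkerII t ht).norm
      · exact hprodIIR _ (hgtscont t) t₀ t le_rfl ht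
      · intro s hs
        rw [norm_mul]
        have h1 := hker (t-s) (by linarith [hs.2])
        have h2 : ‖Fc s‖ = |F s| := by
          rw [hFc]
          simp only
          rw [Complex.norm_real, Real.norm_eq_abs]
        rw [h2]
        have h3 : g (t-s) = Real.exp (-(α*(t-s))) * min (t-s) (1/β) := by rw [hg]
        rw [h3]
        exact mul_le_mul_of_nonneg_right h1 (abs_nonneg _)
  -- Part 2 : global bound
  have h1L : 0 < 1 - L := by linarith
  set B : ℝ := (C₀ + M) / (1 - L) with hBdef
  have hBM : M ≤ B := by
    rw [hBdef, le_div_iff₀ h1L]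
    nlinarith
  have hB0 : 0 ≤ B := le_trans hM0 hBM
  have hyB : ∀ t, |y t| ≤ B := by
    intro T
    rcases le_or_gt T t₀ with hT | hT
    · exact (hM T hT).trans hBM
    · obtain ⟨sm, hsm, hmax⟩ := isCompact_Icc.exists_isMaxOn (Set.nonempty_Icc.2 hT.le)
        (ycont.abs.continuousOn (s := Set.Icc t₀ T))
      have hTle : |y T| ≤ |y sm| := hmax ⟨hT.le, le_rfl⟩
      refine le_trans hTle ?_
      set V : ℝ := max M (|y sm|) with hVdef
      have hV0 : 0 ≤ V := le_trans hM0 (le_max_left _ _)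
      have hsm0 : t₀ ≤ sm := hsm.1
      have hFV : ∀ s, s ∈ Set.Icc t₀ sm → |F s| ≤ ρ * V := by
        intro s hs
        apply hFb s V hs.1
        intro r hr
        rcases le_or_gt r t₀ with h0 | h0
        · exact (hM r h0).trans (le_max_left _ _)
        · exact le_trans (hmax ⟨h0.le, hr.trans (hs.2.trans hsm.2)⟩) (le_max_right _ _)
      have hkey := key0 sm hsm0
      have hIbound : (∫ s in t₀..sm, g (sm - s) * |F s|) ≤ ρ * V * C := by
        have hmono : (∫ s in t₀..sm, g (sm-s) * |F s|)
            ≤ ∫ s in t₀..sm, g (sm-s) * (ρ*V) := by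
          apply intervalIntegral.integral_mono_on hsm0
          · exact hprodIIR _ (hgtscont sm) t₀ sm le_rfl hsm0
          · exact Continuous.intervalIntegrable ((hgtscont sm).mul continuous_const) _ _
          · intro s hs
            exact mul_le_mul_of_nonneg_left (hFV s hs) (hg0 _ (by linarith [hs.2]))
        have h2 : (∫ s in t₀..sm, g (sm-s) * (ρ*V)) = (ρ*V) * ∫ s in t₀..sm, g (sm-s) := by
          rw [← intervalIntegral.integral_const_mul]
          apply intervalIntegral.integral_congr
          intro s _
          beta_reduce
          ring
        have h3 : (∫ s in t₀..sm, g (sm-s)) ≤ C := by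
          have h4 := hint t₀ sm hsm0
          rw [hg]
          exact h4
        have hρV : 0 ≤ ρ * V := mul_nonneg hρ0 hV0
        calc (∫ s in t₀..sm, g (sm - s) * |F s|) ≤ (ρ*V) * ∫ s in t₀..sm, g (sm-s) := by
              rw [← h2]; exact hmono
          _ ≤ ρ * V * C := mul_le_mul_of_nonneg_left h3 hρV
      have hexple : Real.exp (-(α*(sm - t₀))) ≤ 1 := by
        rw [Real.exp_le_one_iff]
        nlinarith
      have t1 : C₀ * Real.exp (-(α*(sm-t₀))) ≤ C₀ := mul_le_of_le_one_right hC₀0 hexple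
      have hsmle : |y sm| ≤ C₀ + ρ * V * C := by linarith [hkey, hIbound]
      have hVle : V ≤ M + |y sm| := by
        apply max_le
        · linarith [abs_nonneg (y sm)]
        · linarith [hM0]
      have hLV : ρ * V * C ≤ L * (M + |y sm|) := by
        have : ρ * V * C = L * V := by rw [hLdef]; ring
        rw [this]
        exact mul_le_mul_of_nonneg_left hVle hL0
      have hLM : L * M ≤ M := by
        have := mul_le_mul_of_nonneg_right hL.le hM0
        linarith [this]
      rw [hBdef, le_div_iff₀ h1L]
      nlinarith [hsmle, hLV, hLM]
  -- Part 3 : limsup argument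
  have hbddle : IsBoundedUnder (· ≤ ·) atTop (fun t => |y t|) :=
    isBoundedUnder_of ⟨B, fun t => hyB t⟩
  have hbddge : IsBoundedUnder (· ≥ ·) atTop (fun t => |y t|) :=
    isBoundedUnder_of ⟨0, fun t => abs_nonneg _⟩
  set l : ℝ := limsup (fun t => |y t|) atTop with hldef
  -- crude exponential bound for g
  have hgexp : ∀ d, 0 ≤ d → g d ≤ (2/α) * Real.exp (-(α/2*d)) := by
    intro d hd
    have h2 : Real.exp (-(α*d)) = Real.exp (-(α/2*d)) * Real.exp (-(α/2*d)) := by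
      rw [← Real.exp_add]; congr 1; ring
    have hE := Real.exp_pos (-(α/2*d))
    have hE' := Real.exp_pos (α/2*d)
    have hEE : Real.exp (-(α/2*d)) * Real.exp (α/2*d) = 1 := by
      rw [← Real.exp_add]; simp
    have h5 : α/2*d + 1 ≤ Real.exp (α/2*d) := Real.add_one_le_exp _
    have h3 : d * Real.exp (-(α/2*d)) ≤ 2/α := by
      have k1 : (d * Real.exp (-(α/2*d))) * Real.exp (α/2*d) = d := by
        rw [mul_assoc, hEE, mul_one]
      have k2 : α * (d * Real.exp (-(α/2*d))) ≤ 2 := by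
        nlinarith [k1, h5, hE', hα, mul_nonneg hd hE.le]
      rw [le_div_iff₀ hα]
      linarith [k2]
    have hmin : min d (1/β) ≤ d := min_le_left _ _
    have hg0d : (0:ℝ) ≤ min d (1/β) := le_min hd (by positivity)
    calc g d = Real.exp (-(α*d)) * min d (1/β) := by rw [hg]
      _ ≤ Real.exp (-(α*d)) * d := mul_le_mul_of_nonneg_left hmin (Real.exp_pos _).le
      _ = (d * Real.exp (-(α/2*d))) * Real.exp (-(α/2*d)) := by rw [h2]; ring
      _ ≤ (2/α) * Real.exp (-(α/2*d)) := mul_le_mul_of_nonneg_right h3 hE.le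
  -- key limsup inequality
  have hlkey : ∀ ε : ℝ, 0 < ε → l ≤ L * (l + ε) + ε := by
    intro ε hε
    have hev1 : ∀ᶠ t in atTop, |y t| < l + ε :=
      eventually_lt_of_limsup_lt (by linarith) hbddle
    obtain ⟨T₁', hT₁'⟩ := eventually_atTop.1 (hev1.and (eventually_ge_atTop t₀))
    set T₁ : ℝ := max T₁' t₀ with hT₁def
    obtain ⟨T₂', hT₂'⟩ := eventually_atTop.1 (hhtend.eventually (eventually_ge_atTop T₁))
    set T₂ : ℝ := max T₂' T₁ with hT₂def
    have hT₂T₁ : T₁ ≤ T₂ := le_max_right _ _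
    have hT₂t₀ : t₀ ≤ T₂ := le_trans (le_max_right _ _) hT₂T₁
    have hlε0 : 0 ≤ l + ε := by
      have := (hT₁' (max T₁' t₀) (le_max_left _ _)).1
      linarith [abs_nonneg (y (max T₁' t₀))]
    have hFsmall : ∀ s, T₂ ≤ s → |F s| ≤ ρ * (l + ε) := by
      intro s hs
      have hst₀ : t₀ ≤ s := hT₂t₀.trans hs
      have h1 : |y s| ≤ l + ε :=
        (hT₁' s (le_trans (le_max_left _ _) (hT₂T₁.trans hs))).1.le
      have h2 : |y (h s)| ≤ l + ε := by
        have hhs : T₁ ≤ h s := hT₂' s (le_trans (le_max_left _ _) hs)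
        exact (hT₁' (h s) (le_trans (le_max_left _ _) hhs)).1.le
      calc |F s| ≤ ρ₁ * |y s| + ρ₂ * |y (h s)| := hF s hst₀
        _ ≤ ρ₁ * (l+ε) + ρ₂ * (l+ε) := by
            have := mul_le_mul_of_nonneg_left h1 hρ₁
            have := mul_le_mul_of_nonneg_left h2 hρ₂
            linarith
        _ = ρ * (l+ε) := by rw [hρdef]; ring
    -- pointwise estimate for t ≥ T₂
    have hpt : ∀ t, T₂ ≤ t →
        |y t| ≤ (C₀ * Real.exp (-(α*(t-t₀)))
          + (T₂ - t₀) * ((2/α) * Real.exp (-(α/2*(t-T₂))) * (ρ*B))) + L*(l+ε) := by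
      intro t ht
      have ht₀ : t₀ ≤ t := hT₂t₀.trans ht
      have hsplit : (∫ s in t₀..t, g (t-s) * |F s|)
          = (∫ s in t₀..T₂, g (t-s) * |F s|) + ∫ s in T₂..t, g (t-s) * |F s| := by
        rw [intervalIntegral.integral_add_adjacent_intervals
          (hprodIIR _ (hgtscont t) t₀ T₂ le_rfl hT₂t₀)
          (hprodIIR _ (hgtscont t) T₂ t hT₂t₀ ht)]
      have hhead : (∫ s in t₀..T₂, g (t-s) * |F s|)
          ≤ (T₂ - t₀) * ((2/α) * Real.exp (-(α/2*(t-T₂))) * (ρ*B)) := by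
        have hmono : (∫ s in t₀..T₂, g (t-s) * |F s|)
            ≤ ∫ s in t₀..T₂, (2/α) * Real.exp (-(α/2*(t-T₂))) * (ρ*B) := by
          apply intervalIntegral.integral_mono_on hT₂t₀
          · exact hprodIIR _ (hgtscont t) t₀ T₂ le_rfl hT₂t₀
          · exact intervalIntegrable_const
          · intro s hs
            have hds : 0 ≤ t - s := by linarith [hs.2]
            have hFs : |F s| ≤ ρ * B := hFb s B hs.1 (fun r _ => hyB r)
            have hgs : g (t-s) ≤ (2/α) * Real.exp (-(α/2*(t-T₂))) := by
              refine le_trans (hgexp (t-s) hds) ?_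
              apply mul_le_mul_of_nonneg_left _ (by positivity)
              apply Real.exp_le_exp.2
              nlinarith [hs.2]
            have hg0s := hg0 (t-s) hds
            have hF0 := abs_nonneg (F s)
            have he0 : (0:ℝ) ≤ (2/α) * Real.exp (-(α/2*(t-T₂))) := by positivity
            nlinarith [mul_le_mul hgs hFs hF0 he0]
        refine le_trans hmono (le_of_eq ?_)
        rw [intervalIntegral.integral_const, smul_eq_mul]
      have htail : (∫ s in T₂..t, g (t-s) * |F s|) ≤ L * (l+ε) := by
        have hmono : (∫ s in T₂..t, g (t-s) * |F s|)
            ≤ ∫ s in T₂..t, g (t-s) * (ρ*(l+ε)) := by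
          apply intervalIntegral.integral_mono_on ht
          · exact hprodIIR _ (hgtscont t) T₂ t hT₂t₀ ht
          · exact Continuous.intervalIntegrable ((hgtscont t).mul continuous_const) _ _
          · intro s hs
            exact mul_le_mul_of_nonneg_left (hFsmall s hs.1) (hg0 _ (by linarith [hs.2]))
        have h2 : (∫ s in T₂..t, g (t-s) * (ρ*(l+ε))) = (ρ*(l+ε)) * ∫ s in T₂..t, g (t-s) := by
          rw [← intervalIntegral.integral_const_mul]
          apply intervalIntegral.integral_congr
          intro s _
          beta_reduce
          ring
        have h3 : (∫ s in T₂..t, g (t-s)) ≤ C := by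
          have h4 := hint T₂ t ht
          rw [hg]
          exact h4
        have hρl : 0 ≤ ρ * (l+ε) := mul_nonneg hρ0 hlε0
        calc (∫ s in T₂..t, g (t-s) * |F s|) ≤ (ρ*(l+ε)) * ∫ s in T₂..t, g (t-s) := by
              rw [← h2]; exact hmono
          _ ≤ (ρ*(l+ε)) * C := mul_le_mul_of_nonneg_left h3 hρl
          _ = L * (l+ε) := by rw [hLdef]; ring
      have := key0 t ht₀
      rw [hsplit] at this
      linarith [this, hhead, htail]
    -- the decaying prefactor tends to 0
    have hψ : Tendsto (fun t => C₀ * Real.exp (-(α*(t-t₀)))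
        + (T₂ - t₀) * ((2/α) * Real.exp (-(α/2*(t-T₂))) * (ρ*B))) atTop (nhds 0) := by
      have eA : Tendsto (fun t : ℝ => t - t₀) atTop atTop := by
        simpa [sub_eq_add_neg] using tendsto_atTop_add_const_right atTop (-t₀) tendsto_id
      have eB : Tendsto (fun t : ℝ => α*(t-t₀)) atTop atTop := eA.const_mul_atTop hα
      have e2 : Tendsto (fun t : ℝ => Real.exp (-(α*(t-t₀)))) atTop (nhds 0) :=
        Real.tendsto_exp_atBot.comp (tendsto_neg_atTop_atBot.comp eB)
      have eA' : Tendsto (fun t : ℝ => t - T₂) atTop atTop := by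
        simpa [sub_eq_add_neg] using tendsto_atTop_add_const_right atTop (-T₂) tendsto_id
      have eB' : Tendsto (fun t : ℝ => α/2*(t-T₂)) atTop atTop :=
        eA'.const_mul_atTop (by positivity)
      have e3 : Tendsto (fun t : ℝ => Real.exp (-(α/2*(t-T₂)))) atTop (nhds 0) :=
        Real.tendsto_exp_atBot.comp (tendsto_neg_atTop_atBot.comp eB')
      have h4 := (e2.const_mul C₀).add
        (((e3.const_mul (2/α)).mul_const (ρ*B)).const_mul (T₂ - t₀))
      simpa using h4
    have hev2 : ∀ᶠ t in atTop, |y t| ≤ L*(l+ε) + ε := by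
      have hψev := hψ.eventually_lt_const hε
      filter_upwards [hψev, eventually_ge_atTop T₂] with t h1 h2
      linarith [hpt t h2]
    exact limsup_le_of_le hbddge.isCoboundedUnder_le hev2
  -- conclude l ≤ 0
  have hl0 : l ≤ 0 := by
    have hll : l ≤ L * l := by
      apply le_of_forall_pos_le_add
      intro ε' hε'
      have hL1pos : 0 < L + 1 := by linarith
      have h6 := hlkey (ε'/(L+1)) (div_pos hε' hL1pos)
      have h7 : L * (l + ε'/(L+1)) + ε'/(L+1) = L*l + ε' := by
        field_simp
        ring
      linarith [h6, h7.le, h7.ge]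
    by_contra hcon
    push_neg at hcon
    nlinarith [hll, mul_pos h1L hcon]
  -- conclude convergence
  rw [Metric.tendsto_nhds]
  intro ε hε
  have hlt : limsup (fun t => |y t|) atTop < ε := lt_of_le_of_lt hl0 hε
  filter_upwards [eventually_lt_of_limsup_lt hlt hbddle] with t ht
  rw [Real.dist_eq, sub_zero]
  exact ht

end AuxDefs

set_option maxHeartbeats 1000000 in
/-- Corollary 5: stabilization of the equilibrium (2k+1)π/ω of the sunflower equation
ẍ(t) + a·ẋ(t) + A·sin(ω·x(h(t))) = −K[x(t) − (2k+1)π/ω]. -/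
theorem sunflower_proportional_control_stability
    (t₀ a A ω K : ℝ) (k : ℕ)
    (h : ℝ → ℝ)
    (hhmeas : Measurable h) (hhle : ∀ t, h t ≤ t) (hhtend : Tendsto h atTop atTop)
    (ha : 0 < a) (hA : 0 < A) (hω : 0 < ω) (hK : 0 < K)
    (hcond :
      (A * ω < K ∧ K ≤ a ^ 2 / 4 ∧ ∃ τ > (0:ℝ), ∀ t, t - h t ≤ τ) ∨
      (a ^ 2 / 4 ≤ K ∧ K < a ^ 2 / 2 - A * ω ∧ ∃ τ > (0:ℝ), ∀ t, t - h t ≤ τ) ∨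
      (4 * K > a ^ 2 ∧ A * ω < a * Real.sqrt (4 * K - a ^ 2) / 4))
    (x x' x'' : ℝ → ℝ)
    (hx' : ∀ t, HasDerivAt x (x' t) t) (hx'' : ∀ t, HasDerivAt x' (x'' t) t)
    (hinit : ∃ M : ℝ, ∀ t ≤ t₀, |x t| ≤ M ∧ |x' t| ≤ M)
    (heq : ∀ t ≥ t₀, x'' t + a * x' t + A * Real.sin (ω * x (h t))
        = -K * (x t - (2 * (k : ℝ) + 1) * Real.pi / ω)) :
    Tendsto x atTop (nhds ((2 * (k : ℝ) + 1) * Real.pi / ω)) := by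
  obtain ⟨M, hMx⟩ := hinit
  set c : ℝ := (2 * (k : ℝ) + 1) * Real.pi / ω with hcdef
  set y : ℝ → ℝ := fun t => x t - c with hydef
  have hy' : ∀ t, HasDerivAt y (x' t) t := fun t => (hx' t).sub_const c
  have hxy : ∀ t, x t = y t + c := fun t => by rw [hydef]; ring
  have hωc : ω * c = (2 * (k:ℝ) + 1) * Real.pi := by
    rw [hcdef]
    field_simp
  have hsin : ∀ u : ℝ, Real.sin (ω * (u + c)) = - Real.sin (ω * u) := by
    intro u
    have e1 : ω * (u + c) = (ω*u + Real.pi) + (k:ℕ) * (2*Real.pi) := by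
      rw [mul_add, hωc]
      push_cast
      ring
    rw [e1, Real.sin_add_nat_mul_two_pi, Real.sin_add_pi]
  have hycont : Continuous y := by
    rw [continuous_iff_continuousAt]
    exact fun t => (hy' t).continuousAt
  have main : ∀ β C : ℝ, 0 < β → 0 ≤ C →
      ((|(a/2)^2 + β^2 - K| + A*ω) * C < 1) →
      (∀ u v : ℝ, u ≤ v →
        (∫ s in u..v, Real.exp (-((a/2)*(v-s))) * min (v-s) (1/β)) ≤ C) →
      Tendsto y atTop (nhds 0) := by
    intro β C hβ hC hL hint
    set m : ℝ := (a/2)^2 + β^2 with hmdef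
    set F : ℝ → ℝ := fun t => (m - K)*(y t) + A*Real.sin (ω * y (h t)) with hFdef
    have hFmeas : Measurable F := by
      apply Measurable.add
      · exact (hycont.measurable).const_mul _
      · exact (Real.measurable_sin.comp
          (((hycont.measurable).comp hhmeas).const_mul ω)).const_mul A
    have hFle : ∀ t, t₀ ≤ t → |F t| ≤ |m - K| * |y t| + (A*ω) * |y (h t)| := by
      intro t _
      refine le_trans (abs_add_le _ _) ?_
      rw [abs_mul]
      apply add_le_add_right
      rw [abs_mul, abs_of_pos hA]
      have h1 : |Real.sin (ω * y (h t))| ≤ |ω * y (h t)| := Real.abs_sin_le_abs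
      have h2 : |ω * y (h t)| = ω * |y (h t)| := by
        rw [abs_mul, abs_of_pos hω]
      calc A * |Real.sin (ω * y (h t))| ≤ A * (ω * |y (h t)|) := by
            rw [← h2]; exact mul_le_mul_of_nonneg_left h1 hA.le
        _ = A*ω * |y (h t)| := by ring
    have hMy : ∀ t, t ≤ t₀ → |y t| ≤ M + |c| := by
      intro t ht
      rw [hydef]
      beta_reduce
      rw [sub_eq_add_neg]
      refine le_trans (abs_add_le _ _) ?_
      rw [abs_neg]
      exact add_le_add_left (hMx t ht).1 _
    have hODE : ∀ t, t₀ ≤ t → x'' t + (2*(a/2)) * x' t + ((a/2)^2 + β^2) * y t = F t := by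
      intro t ht
      have e := heq t ht
      have e2 : Real.sin (ω * x (h t)) = - Real.sin (ω * y (h t)) := by
        rw [hxy (h t)]
        exact hsin _
      have e3 : x t - c = y t := by rw [hydef]
      rw [e2, e3] at e
      rw [hFdef, hmdef]
      beta_reduce
      linear_combination e
    exact aux_stab t₀ (a/2) β (|m - K|) (A*ω) C (M + |c|) h y x' x'' F
      (by linarith) hβ (abs_nonneg _) (by positivity) hC hL hy' hx'' hFmeas hFle
      hhle hhtend hMy hODE hint
  have hconc : Tendsto y atTop (nhds 0) := by
    rcases hcond with ⟨h1, h2, -⟩ | ⟨h1, h2, -⟩ | ⟨h1, h2⟩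
    · -- case (a)
      set β : ℝ := Real.sqrt ((K - A*ω)/2) with hβdef
      have hAω : 0 < A*ω := by positivity
      have hβ2 : β^2 = (K - A*ω)/2 := Real.sq_sqrt (by linarith)
      have hβpos : 0 < β := Real.sqrt_pos.2 (by linarith)
      refine main β (1/(a/2)^2) hβpos (by positivity) ?_
        (fun u v huv => int_min_le₁ (a/2) β u v (by linarith) hβpos huv)
      have habs : |(a/2)^2 + β^2 - K| = (a/2)^2 + β^2 - K := by
        apply _root_.abs_of_nonneg
        nlinarith [hβ2, h2]
      rw [habs, hβ2, mul_one_div, div_lt_one (by positivity)]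
      nlinarith [h1, ha]
    · -- case (b)
      have hAω : 0 < A*ω := by positivity
      have hδpos : 0 < (a^2/2 - K - A*ω)/2 := by linarith
      set β : ℝ := Real.sqrt (K - a^2/4 + (a^2/2 - K - A*ω)/2) with hβdef
      have hβ2 : β^2 = K - a^2/4 + (a^2/2 - K - A*ω)/2 := Real.sq_sqrt (by linarith)
      have hβpos : 0 < β := Real.sqrt_pos.2 (by linarith)
      refine main β (1/(a/2)^2) hβpos (by positivity) ?_
        (fun u v huv => int_min_le₁ (a/2) β u v (by linarith) hβpos huv)
      have habs : |(a/2)^2 + β^2 - K| = (a^2/2 - K - A*ω)/2 := by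
        rw [hβ2]
        rw [_root_.abs_of_nonneg (by nlinarith)]
        ring
      have hAωK : A*ω < K := by nlinarith
      rw [habs, mul_one_div, div_lt_one (by positivity)]
      nlinarith
    · -- case (c)
      have hAω : 0 < A*ω := by positivity
      set β : ℝ := Real.sqrt (K - a^2/4) with hβdef
      have hβ2 : β^2 = K - a^2/4 := Real.sq_sqrt (by nlinarith)
      have hβpos : 0 < β := Real.sqrt_pos.2 (by nlinarith)
      have hsqrt : Real.sqrt (4*K - a^2) = 2*β := by
        have e1 : (4:ℝ)*K - a^2 = (2:ℝ)^2*(K - a^2/4) := by ring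
        rw [e1, Real.sqrt_mul (by positivity), Real.sqrt_sq (by norm_num : (0:ℝ) ≤ 2)]
      have hAωβ : A*ω < (a/2)*β := by
        rw [hsqrt] at h2
        nlinarith [h2]
      refine main β (1/((a/2)*β)) hβpos (by positivity) ?_
        (fun u v huv => int_min_le₂ (a/2) β u v (by linarith) hβpos huv)
      have habs : |(a/2)^2 + β^2 - K| = 0 := by
        rw [hβ2]
        rw [_root_.abs_eq_zero]
        ring
      rw [habs, zero_add, mul_one_div, div_lt_one (by positivity)]
      exact hAωβ
  have h9 := hconc.add_const c
  rw [zero_add] at h9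
  exact h9.congr fun t => by simp [hydef]
end IntBounds
end

section
/- Consider the controlled equation ẍ(t) + a·ẋ(t) + b·x(t) = d(t)·|x(g(t))|^{m+1} / (1 + |x(g(t))|^n), where a > 0, b > 0, 0 ≤ m < n, |d(t)| ≤ d₀, and set μ = 1 if m = 0 and μ = m^{m/n} / (n·(n−m)^{m/n − 1}) if m > 0, and C = μ·d₀. If at least one of the following holds: (a) C < b ≤ a²/4 and the delay t − g(t) is bounded; (b) a²/4 ≤ b < a²/2 − C and the delay t − g(t) is bounded; (c) 4b > a² and C < a·√(4b − a²)/4; then the zero equilibrium is globally asymptotically stable: every twice differentiable solution x satisfies x(t) → 0 as t → ∞. -/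
open Filter MeasureTheory intervalIntegral

private lemma hill_bound' (m n μ : ℝ) (hm : 0 ≤ m) (hmn : m < n)
    (hμ : μ = if m = 0 then (1:ℝ) else m ^ (m / n) / (n * (n - m) ^ (m / n - 1)))
    (u : ℝ) (hu : 0 ≤ u) : u ^ (m + 1) / (1 + u ^ n) ≤ μ * u := by
  have hn : 0 < n := lt_of_le_of_lt hm hmn
  have hun : (0:ℝ) ≤ u ^ n := Real.rpow_nonneg hu n
  have hden : (0:ℝ) < 1 + u ^ n := by linarith
  rw [div_le_iff₀ hden]
  rcases eq_or_lt_of_le hu with h0 | hupos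
  · rw [← h0, Real.zero_rpow (by linarith : m + 1 ≠ 0)]
    ring_nf
    positivity
  · have hsplit : u ^ (m + 1) = u ^ m * u := by
      rw [Real.rpow_add hupos, Real.rpow_one]
    rw [hsplit]
    have key : u ^ m ≤ μ * (1 + u ^ n) := by
      rcases eq_or_lt_of_le hm with hm0 | hmpos
      · rw [← hm0] at hμ ⊢
        rw [if_pos rfl] at hμ
        rw [Real.rpow_zero, hμ]
        linarith
      · rw [if_neg (ne_of_gt hmpos)] at hμ
        set θ : ℝ := m / n with hθdef
        have hθpos : 0 < θ := div_pos hmpos hn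
        have hθlt : θ < 1 := (div_lt_one hn).2 hmn
        have hnm : 0 < n - m := by linarith
        set c : ℝ := m / (n - m) with hcdef
        have hcpos : 0 < c := div_pos hmpos hnm
        set v : ℝ := u ^ n with hvdef
        have hvpos : 0 < v := Real.rpow_pos_of_pos hupos n
        have hum : u ^ m = v ^ θ := by
          rw [hvdef, ← Real.rpow_mul hu]
          rw [hθdef]
          field_simp
        have amgm : v ^ θ * c ^ (1 - θ) ≤ θ * v + (1 - θ) * c :=
          Real.geom_mean_le_arith_mean2_weighted hθpos.le (by linarith) hvpos.le hcpos.le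
            (by ring)
        have hc1θ : (0:ℝ) < c ^ (1 - θ) := Real.rpow_pos_of_pos hcpos _
        have hθc : (1 - θ) * c = θ := by
          rw [hcdef, hθdef]; field_simp
        have hμ2 : μ * c ^ (1 - θ) = θ := by
          have e1 : (n-m) ^ (θ-1) = ((n-m) ^ (1-θ))⁻¹ := by
            rw [show θ-1 = -(1-θ) by ring, Real.rpow_neg hnm.le]
          have e2 : c ^ (1-θ) = m ^ (1-θ) / (n-m) ^ (1-θ) := by
            rw [hcdef, Real.div_rpow hmpos.le hnm.le]
          have e3 : m ^ θ * m ^ (1-θ) = m := by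
            rw [← Real.rpow_add hmpos]; norm_num
          have p1 : (0:ℝ) < (n-m) ^ (1-θ) := Real.rpow_pos_of_pos hnm _
          have p2 : (0:ℝ) < m ^ (1-θ) := Real.rpow_pos_of_pos hmpos _
          have p3 : (0:ℝ) < m ^ θ := Real.rpow_pos_of_pos hmpos _
          have hθn : θ * n = m := by rw [hθdef]; field_simp
          rw [hμ, e1, e2]
          field_simp
          nlinarith [e3, hθn, p1, p2, p3]
        rw [hum]
        calc v ^ θ = v ^ θ * c ^ (1 - θ) / c ^ (1 - θ) := by field_simp
          _ ≤ (θ * v + (1 - θ) * c) / c ^ (1 - θ) := by gcongr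
          _ = (θ * v + θ) / c ^ (1 - θ) := by rw [hθc]
          _ = μ * (1 + v) := by
              rw [div_eq_iff (ne_of_gt hc1θ),
                show μ * (1 + v) * c ^ (1 - θ) = μ * c ^ (1-θ) * (1+v) by ring, hμ2]
              ring
    calc u ^ m * u ≤ (μ * (1 + u ^ n)) * u := mul_le_mul_of_nonneg_right key hu
      _ = μ * u * (1 + u ^ n) := by ring

private lemma norm_cexp_mul' (lam : ℂ) (r : ℝ) :
    ‖Complex.exp (lam * r)‖ = Real.exp (lam.re * r) := by
  rw [Complex.norm_exp]
  simp [Complex.mul_re]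

private lemma int_exp_eq' (ν T t : ℝ) (hν : ν ≠ 0) :
    ∫ s in T..t, Real.exp (-ν * (t - s)) = (1 - Real.exp (-ν * (t - T))) / ν := by
  have hd : ∀ s ∈ Set.uIcc T t,
      HasDerivAt (fun s => Real.exp (-ν * (t - s)) / ν) (Real.exp (-ν * (t - s))) s := by
    intro s _
    have h1 : HasDerivAt (fun s : ℝ => -ν * (t - s)) ν s := by
      simpa using ((hasDerivAt_id s).const_sub t).const_mul (-ν)
    have h2 := (h1.exp).div_const ν
    simpa [mul_comm, mul_div_assoc, mul_div_cancel_right₀, hν] using h2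
  rw [integral_eq_sub_of_hasDerivAt hd (by apply Continuous.intervalIntegrable; fun_prop)]
  simp
  ring

private lemma linODE' (lam : ℂ) (y F : ℝ → ℂ) (T t : ℝ)
    (hy : ∀ s ∈ Set.uIcc T t, HasDerivAt y (lam * y s + F s) s)
    (hF : IntervalIntegrable F volume T t) :
    y t = Complex.exp (lam * (t - T)) * y T
      + ∫ s in T..t, Complex.exp (lam * (t - s)) * F s := by
  set w : ℝ → ℂ := fun s => Complex.exp (-lam * s) * y s with hw
  have hwderiv : ∀ s ∈ Set.uIcc T t, HasDerivAt w (Complex.exp (-lam * s) * F s) s := by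
    intro s hs
    have h0 : HasDerivAt (fun s : ℝ => -lam * (s : ℂ)) (-lam) s := by
      simpa using (HasDerivAt.ofReal_comp (hasDerivAt_id s)).const_mul (-lam)
    have h1 : HasDerivAt (fun s : ℝ => Complex.exp (-lam * s))
        (-lam * Complex.exp (-lam * s)) s := by
      simpa [mul_comm] using h0.cexp
    have h2 := h1.mul (hy s hs)
    have e : (-lam * Complex.exp (-lam * s)) * y s
        + Complex.exp (-lam * s) * (lam * y s + F s) = Complex.exp (-lam * s) * F s := by
      ring
    exact e ▸ h2
  have hint : IntervalIntegrable (fun s => Complex.exp (-lam * s) * F s) volume T t := by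
    apply hF.continuousOn_mul
    exact (Complex.continuous_exp.comp (by fun_prop)).continuousOn
  have hftc := integral_eq_sub_of_hasDerivAt hwderiv hint
  have hwt : y t = Complex.exp (lam * t) * w t := by
    rw [hw]
    simp only []
    rw [← mul_assoc, ← Complex.exp_add]
    ring_nf
    simp
  rw [hwt, show w t = w T + ∫ s in T..t, Complex.exp (-lam * s) * F s by
    rw [hftc]; ring]
  rw [mul_add, ← intervalIntegral.integral_const_mul]
  congr 1
  · rw [hw]
    simp only []
    rw [← mul_assoc, ← Complex.exp_add]
    ring_nf
  · apply intervalIntegral.integral_congr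
    intro s hs
    show Complex.exp (lam * t) * (Complex.exp (-lam * s) * F s)
        = Complex.exp (lam * (t - s)) * F s
    rw [← mul_assoc, ← Complex.exp_add]
    ring_nf

private lemma conv_bound' (lam : ℂ) (mm : ℝ) (hre : lam.re = -mm) (hmm : 0 < mm) (f : ℝ → ℂ)
    (T s : ℝ) (hTs : T ≤ s)
    (hfi : IntervalIntegrable f volume T s)
    (c : ℝ) (hc : 0 ≤ c) (hfb : ∀ σ ∈ Set.Icc T s, ‖f σ‖ ≤ c) :
    ‖∫ σ in T..s, Complex.exp (lam * (s - σ)) * f σ‖ ≤ c / mm := by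
  have hg : IntervalIntegrable (fun σ => Real.exp (-mm * (s - σ)) * c) volume T s := by
    apply Continuous.intervalIntegrable; fun_prop
  have hb := intervalIntegral.norm_integral_le_abs_of_norm_le
    (f := fun σ => Complex.exp (lam * (s - σ)) * f σ)
    (g := fun σ => Real.exp (-mm * (s - σ)) * c)
    (μ := volume) (a := T) (b := s) ?_ hg
  · refine hb.trans ?_
    have hge : ∫ σ in T..s, Real.exp (-mm * (s - σ)) * c
        = (1 - Real.exp (-mm * (s - T))) / mm * c := by
      rw [intervalIntegral.integral_mul_const, int_exp_eq' mm T s (ne_of_gt hmm)]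
    have hE : (0:ℝ) ≤ Real.exp (-mm * (s - T)) := (Real.exp_pos _).le
    rw [hge, abs_of_nonneg]
    · calc (1 - Real.exp (-mm * (s - T))) / mm * c ≤ 1 / mm * c := by
            gcongr
            linarith
        _ = c / mm := by ring
    · have h1 : Real.exp (-mm * (s - T)) ≤ 1 := by
        apply Real.exp_le_one_iff.2
        nlinarith
      exact mul_nonneg (div_nonneg (by linarith) hmm.le) hc
  · rw [Set.uIoc_of_le hTs]
    refine (ae_restrict_iff' measurableSet_Ioc).2 (Filter.Eventually.of_forall fun σ hσ => ?_)
    have h1 : ‖Complex.exp (lam * ((s:ℂ) - (σ:ℂ)))‖ = Real.exp (-mm * (s - σ)) := by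
      rw [show ((s:ℂ) - (σ:ℂ)) = ((s - σ : ℝ) : ℂ) by push_cast; ring, norm_cexp_mul', hre]
    rw [norm_mul, h1]
    exact mul_le_mul_of_nonneg_left (hfb σ ⟨hσ.1.le, hσ.2⟩) (Real.exp_pos _).le
private lemma ME1 (a b : ℝ) (lam1 lam2 : ℂ) (m1 m2 : ℝ)
    (hsum : lam1 + lam2 = -(a:ℂ)) (hprod : lam1 * lam2 = (b:ℂ))
    (hre1 : lam1.re = -m1) (hre2 : lam2.re = -m2) (hm1 : 0 < m1) (hm2 : 0 < m2)
    (X V f : ℝ → ℂ) (hX : ∀ s, HasDerivAt X (V s) s)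
    (hfi : ∀ p q : ℝ, IntervalIntegrable f volume p q)
    (T t : ℝ) (hTt : T ≤ t)
    (hV : ∀ s ∈ Set.Icc T t, HasDerivAt V (-(a:ℂ) * V s - (b:ℂ) * X s + f s) s)
    (c : ℝ) (hc : 0 ≤ c) (hfb : ∀ s ∈ Set.Icc T t, ‖f s‖ ≤ c) :
    ‖X t‖ ≤ (‖X T‖ + ‖V T - lam2 * X T‖ * (t - T)) * Real.exp (-(min m1 m2) * (t - T))
      + c / (m1 * m2) := by
  set ν : ℝ := min m1 m2 with hνdef
  have hν : 0 < ν := lt_min hm1 hm2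
  set u : ℝ → ℂ := fun s => V s - lam2 * X s with hu
  set U : ℝ := ‖u T‖ with hU
  have hU0 : 0 ≤ U := norm_nonneg _
  -- derivative of u
  have hud : ∀ s ∈ Set.Icc T t, HasDerivAt u (lam1 * u s + f s) s := by
    intro s hs
    have h := (hV s hs).sub ((hX s).const_mul lam2)
    have e : -(a:ℂ) * V s - (b:ℂ) * X s + f s - lam2 * V s = lam1 * u s + f s := by
      rw [hu]
      linear_combination (-(V s)) * hsum + (X s) * hprod
    exact e ▸ h
  -- bound on u
  have hub : ∀ s ∈ Set.Icc T t, ‖u s‖ ≤ Real.exp (-m1 * (s - T)) * U + c / m1 := by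
    intro s hs
    have hTs : T ≤ s := hs.1
    have hform := linODE' lam1 u f T s
      (fun σ hσ => hud σ (by
        rw [Set.uIcc_of_le hTs] at hσ
        exact ⟨hσ.1, le_trans hσ.2 hs.2⟩)) (hfi T s)
    rw [hform]
    refine (norm_add_le _ _).trans ?_
    have h1 : ‖Complex.exp (lam1 * ((s:ℂ) - (T:ℂ))) * u T‖ = Real.exp (-m1 * (s - T)) * U := by
      rw [norm_mul, show ((s:ℂ) - (T:ℂ)) = ((s - T : ℝ) : ℂ) by push_cast; ring,
        norm_cexp_mul', hre1]
    have h2 := conv_bound' lam1 m1 hre1 hm1 f T s hTs (hfi T s) c hc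
      (fun σ hσ => hfb σ ⟨hσ.1, le_trans hσ.2 hs.2⟩)
    rw [h1]
    linarith
  -- V continuous on [T,t], so u is
  have hucont : ContinuousOn u (Set.uIcc T t) := by
    rw [Set.uIcc_of_le hTt]
    intro s hs
    exact (hud s hs).continuousAt.continuousWithinAt
  have hui : IntervalIntegrable u volume T t := hucont.intervalIntegrable
  have hXd : ∀ s ∈ Set.uIcc T t, HasDerivAt X (lam2 * X s + u s) s := by
    intro s _
    have e : lam2 * X s + u s = V s := by rw [hu]; ring
    exact e ▸ hX s
  have hformX := linODE' lam2 X u T t hXd hui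
  rw [hformX]
  refine (norm_add_le _ _).trans ?_
  have h1 : ‖Complex.exp (lam2 * ((t:ℂ) - (T:ℂ))) * X T‖
      = Real.exp (-m2 * (t - T)) * ‖X T‖ := by
    rw [norm_mul, show ((t:ℂ) - (T:ℂ)) = ((t - T : ℝ) : ℂ) by push_cast; ring,
      norm_cexp_mul', hre2]
  rw [h1]
  -- bound the convolution with u
  set gg : ℝ → ℝ := fun s => Real.exp (-m2 * (t - s)) * (Real.exp (-m1 * (s - T)) * U + c / m1)
    with hgg
  have hggc : Continuous gg := by rw [hgg]; fun_prop
  have hggi : IntervalIntegrable gg volume T t := hggc.intervalIntegrable _ _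
  have h2 : ‖∫ s in T..t, Complex.exp (lam2 * ((t:ℂ) - (s:ℂ))) * u s‖ ≤ |∫ s in T..t, gg s| := by
    refine intervalIntegral.norm_integral_le_abs_of_norm_le ?_ hggi
    rw [Set.uIoc_of_le hTt]
    refine (ae_restrict_iff' measurableSet_Ioc).2 (Filter.Eventually.of_forall fun s hs => ?_)
    have e1 : ‖Complex.exp (lam2 * ((t:ℂ) - (s:ℂ)))‖ = Real.exp (-m2 * (t - s)) := by
      rw [show ((t:ℂ) - (s:ℂ)) = ((t - s : ℝ) : ℂ) by push_cast; ring, norm_cexp_mul', hre2]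
    rw [norm_mul, e1, hgg]
    exact mul_le_mul_of_nonneg_left (hub s ⟨hs.1.le, hs.2⟩) (Real.exp_pos _).le
  -- compute/bound ∫ gg
  have hggnn : ∀ s, 0 ≤ gg s := by
    intro s
    rw [hgg]
    have : 0 ≤ c / m1 := div_nonneg hc hm1.le
    positivity
  have hggint_nonneg : 0 ≤ ∫ s in T..t, gg s :=
    intervalIntegral.integral_nonneg hTt (fun s _ => hggnn s)
  have hsplit : (∫ s in T..t, gg s)
      = (∫ s in T..t, Real.exp (-m2 * (t - s)) * Real.exp (-m1 * (s - T)) * U)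
        + ∫ s in T..t, Real.exp (-m2 * (t - s)) * (c / m1) := by
    rw [← intervalIntegral.integral_add (by apply Continuous.intervalIntegrable; fun_prop)
      (by apply Continuous.intervalIntegrable; fun_prop)]
    apply intervalIntegral.integral_congr
    intro s _
    rw [hgg]
    ring
  have hpart1 : (∫ s in T..t, Real.exp (-m2 * (t - s)) * Real.exp (-m1 * (s - T)) * U)
      ≤ U * (t - T) * Real.exp (-ν * (t - T)) := by
    have hmono : (∫ s in T..t, Real.exp (-m2 * (t - s)) * Real.exp (-m1 * (s - T)) * U)
        ≤ ∫ _s in T..t, Real.exp (-ν * (t - T)) * U := by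
      refine intervalIntegral.integral_mono_on hTt
        (by apply Continuous.intervalIntegrable; fun_prop)
        (by apply Continuous.intervalIntegrable; fun_prop) ?_
      intro s hs
      rw [← Real.exp_add]
      refine mul_le_mul_of_nonneg_right (Real.exp_le_exp.2 ?_) hU0
      have hν1 : ν ≤ m1 := min_le_left _ _
      have hν2 : ν ≤ m2 := min_le_right _ _
      nlinarith [hs.1, hs.2]
    refine hmono.trans_eq ?_
    rw [intervalIntegral.integral_const]
    simp [smul_eq_mul]
    ring
  have hpart2 : (∫ s in T..t, Real.exp (-m2 * (t - s)) * (c / m1)) ≤ c / (m1 * m2) := by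
    rw [intervalIntegral.integral_mul_const, int_exp_eq' m2 T t (ne_of_gt hm2)]
    have hE : (0:ℝ) ≤ Real.exp (-m2 * (t - T)) := (Real.exp_pos _).le
    have h1 : (1 - Real.exp (-m2 * (t - T))) / m2 * (c / m1) ≤ 1 / m2 * (c / m1) := by
      refine mul_le_mul_of_nonneg_right ?_ (div_nonneg hc hm1.le)
      gcongr
      linarith
    refine h1.trans_eq ?_
    rw [div_mul_div_comm, one_mul, mul_comm m2 m1]
  have hE2 : Real.exp (-m2 * (t - T)) ≤ Real.exp (-ν * (t - T)) := by
    apply Real.exp_le_exp.2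
    have hν2 : ν ≤ m2 := min_le_right _ _
    nlinarith
  have hXTnn : (0:ℝ) ≤ ‖X T‖ := norm_nonneg _
  have habs : |∫ s in T..t, gg s| = ∫ s in T..t, gg s := abs_of_nonneg hggint_nonneg
  rw [habs] at h2
  have hEν : (0:ℝ) ≤ Real.exp (-ν * (t - T)) := (Real.exp_pos _).le
  calc Real.exp (-m2 * (t - T)) * ‖X T‖ + ‖∫ s in T..t, Complex.exp (lam2 * ((t:ℂ) - (s:ℂ))) * u s‖
      ≤ Real.exp (-ν * (t - T)) * ‖X T‖
        + (U * (t - T) * Real.exp (-ν * (t - T)) + c / (m1 * m2)) := by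
        have h3 : (∫ s in T..t, gg s)
            ≤ U * (t - T) * Real.exp (-ν * (t - T)) + c / (m1 * m2) := by
          rw [hsplit]; linarith
        have := h2.trans h3
        have hX1 : Real.exp (-m2 * (t - T)) * ‖X T‖ ≤ Real.exp (-ν * (t - T)) * ‖X T‖ :=
          mul_le_mul_of_nonneg_right hE2 hXTnn
        linarith
    _ = (‖X T‖ + U * (t - T)) * Real.exp (-ν * (t - T)) + c / (m1 * m2) := by ring

private lemma ME2 (a b : ℝ) (lam1 lam2 : ℂ) (α ω : ℝ)
    (hsum : lam1 + lam2 = -(a:ℂ)) (hprod : lam1 * lam2 = (b:ℂ))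
    (hre1 : lam1.re = -α) (hre2 : lam2.re = -α) (hα : 0 < α) (hω : 0 < ω)
    (hdiff : lam1 - lam2 = (2 * ω : ℝ) * Complex.I)
    (X V f : ℝ → ℂ) (hX : ∀ s, HasDerivAt X (V s) s)
    (hfi : ∀ p q : ℝ, IntervalIntegrable f volume p q)
    (T t : ℝ) (hTt : T ≤ t)
    (hV : ∀ s ∈ Set.Icc T t, HasDerivAt V (-(a:ℂ) * V s - (b:ℂ) * X s + f s) s)
    (c : ℝ) (hc : 0 ≤ c) (hfb : ∀ s ∈ Set.Icc T t, ‖f s‖ ≤ c) :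
    ‖X t‖ ≤ ((‖V T - lam2 * X T‖ + ‖V T - lam1 * X T‖) / (2 * ω) + 0 * (t - T))
        * Real.exp (-α * (t - T)) + c / (α * ω) := by
  set u : ℝ → ℂ := fun s => V s - lam2 * X s with hu
  set w : ℝ → ℂ := fun s => V s - lam1 * X s with hwdef
  have hud : ∀ s ∈ Set.Icc T t, HasDerivAt u (lam1 * u s + f s) s := by
    intro s hs
    have h := (hV s hs).sub ((hX s).const_mul lam2)
    have e : -(a:ℂ) * V s - (b:ℂ) * X s + f s - lam2 * V s = lam1 * u s + f s := by
      rw [hu]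
      linear_combination (-(V s)) * hsum + (X s) * hprod
    exact e ▸ h
  have hwd : ∀ s ∈ Set.Icc T t, HasDerivAt w (lam2 * w s + f s) s := by
    intro s hs
    have h := (hV s hs).sub ((hX s).const_mul lam1)
    have e : -(a:ℂ) * V s - (b:ℂ) * X s + f s - lam1 * V s = lam2 * w s + f s := by
      rw [hwdef]
      linear_combination (-(V s)) * hsum + (X s) * hprod
    exact e ▸ h
  have hfu := linODE' lam1 u f T t
    (fun s hs => hud s (by rwa [Set.uIcc_of_le hTt] at hs)) (hfi T t)
  have hfw := linODE' lam2 w f T t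
    (fun s hs => hwd s (by rwa [Set.uIcc_of_le hTt] at hs)) (hfi T t)
  have hXrep : X t = (u t - w t) / (lam1 - lam2) := by
    rw [hu, hwdef]
    have hne : lam1 - lam2 ≠ 0 := by
      rw [hdiff]
      simp [Complex.ext_iff]
      positivity
    field_simp
    ring
  have hnd : ‖lam1 - lam2‖ = 2 * ω := by
    rw [hdiff]
    rw [norm_mul]
    simp [Complex.norm_real, abs_of_pos hω]
  have h1 := conv_bound' lam1 α hre1 hα f T t hTt (hfi T t) c hc hfb
  have h2 := conv_bound' lam2 α hre2 hα f T t hTt (hfi T t) c hc hfb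
  have hE1 : ‖Complex.exp (lam1 * ((t:ℂ) - (T:ℂ)))‖ = Real.exp (-α * (t - T)) := by
    rw [show ((t:ℂ) - (T:ℂ)) = ((t - T : ℝ) : ℂ) by push_cast; ring, norm_cexp_mul', hre1]
  have hE2 : ‖Complex.exp (lam2 * ((t:ℂ) - (T:ℂ)))‖ = Real.exp (-α * (t - T)) := by
    rw [show ((t:ℂ) - (T:ℂ)) = ((t - T : ℝ) : ℂ) by push_cast; ring, norm_cexp_mul', hre2]
  have hnum : ‖u t - w t‖
      ≤ Real.exp (-α * (t - T)) * (‖u T‖ + ‖w T‖) + 2 * (c / α) := by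
    rw [hfu, hfw]
    have e : (Complex.exp (lam1 * ((t:ℂ) - (T:ℂ))) * u T
          + ∫ s in T..t, Complex.exp (lam1 * ((t:ℂ) - (s:ℂ))) * f s)
        - (Complex.exp (lam2 * ((t:ℂ) - (T:ℂ))) * w T
          + ∫ s in T..t, Complex.exp (lam2 * ((t:ℂ) - (s:ℂ))) * f s)
        = (Complex.exp (lam1 * ((t:ℂ) - (T:ℂ))) * u T
            - Complex.exp (lam2 * ((t:ℂ) - (T:ℂ))) * w T)
          + ((∫ s in T..t, Complex.exp (lam1 * ((t:ℂ) - (s:ℂ))) * f s)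
            - ∫ s in T..t, Complex.exp (lam2 * ((t:ℂ) - (s:ℂ))) * f s) := by
      ring
    rw [e]
    refine (norm_add_le _ _).trans ?_
    have hA := (norm_sub_le (Complex.exp (lam1 * ((t:ℂ) - (T:ℂ))) * u T)
      (Complex.exp (lam2 * ((t:ℂ) - (T:ℂ))) * w T))
    have hB := (norm_sub_le (∫ s in T..t, Complex.exp (lam1 * ((t:ℂ) - (s:ℂ))) * f s)
      (∫ s in T..t, Complex.exp (lam2 * ((t:ℂ) - (s:ℂ))) * f s))
    rw [norm_mul, norm_mul, hE1, hE2] at hA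
    have := hA.trans_eq (by ring :
      Real.exp (-α * (t - T)) * ‖u T‖ + Real.exp (-α * (t - T)) * ‖w T‖
        = Real.exp (-α * (t - T)) * (‖u T‖ + ‖w T‖))
    linarith
  rw [hXrep, norm_div, hnd]
  have h2ω : (0:ℝ) < 2 * ω := by linarith
  calc ‖u t - w t‖ / (2 * ω)
      ≤ (Real.exp (-α * (t - T)) * (‖u T‖ + ‖w T‖) + 2 * (c / α)) / (2 * ω) := by
        gcongr
    _ = ((‖u T‖ + ‖w T‖) / (2 * ω) + 0 * (t - T)) * Real.exp (-α * (t - T)) + c / (α * ω) := by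
        field_simp
        ring

private lemma wrapup (t₀ C K ν : ℝ) (hC : 0 ≤ C) (hK : 0 ≤ K) (hq : C * K < 1) (hν : 0 < ν)
    (x : ℝ → ℝ) (hxc : Continuous x) (g : ℝ → ℝ) (hgle : ∀ t, g t ≤ t)
    (hgtend : Tendsto g atTop atTop)
    (M : ℝ) (hM : 0 ≤ M) (hMx : ∀ t ≤ t₀, |x t| ≤ M)
    (hME : ∀ T, t₀ ≤ T → ∃ P Q : ℝ, 0 ≤ P ∧ 0 ≤ Q ∧ ∀ t, T ≤ t → ∀ c, 0 ≤ c →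
      (∀ s ∈ Set.Icc T t, C * |x (g s)| ≤ c) →
      |x t| ≤ (P + Q * (t - T)) * Real.exp (-ν * (t - T)) + K * c) :
    Tendsto x atTop (nhds 0) := by
  set q : ℝ := C * K with hqdef
  have hq0 : 0 ≤ q := mul_nonneg hC hK
  have hq1 : 0 < 1 - q := by linarith
  -- generic bound for the decaying prefactor
  have hdecaybd : ∀ P Q : ℝ, 0 ≤ P → 0 ≤ Q → ∀ τ : ℝ, 0 ≤ τ →
      (P + Q * τ) * Real.exp (-ν * τ) ≤ P + Q / ν := by
    intro P Q hP hQ τ hτ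
    have h1 : Real.exp (-ν * τ) ≤ 1 := Real.exp_le_one_iff.2 (by nlinarith)
    have h2 : τ * Real.exp (-ν * τ) ≤ 1 / ν := by
      have h3 : ν * τ ≤ Real.exp (ν * τ) := by
        have := Real.add_one_le_exp (ν * τ)
        linarith
      rw [show -ν * τ = -(ν * τ) by ring, Real.exp_neg]
      rw [mul_inv_le_iff₀ (Real.exp_pos _), div_mul_eq_mul_div, le_div_iff₀ hν]
      nlinarith
    have hEpos : 0 < Real.exp (-ν * τ) := Real.exp_pos _
    have e1 : P * Real.exp (-ν * τ) ≤ P := by nlinarith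
    have e2 : Q * (τ * Real.exp (-ν * τ)) ≤ Q * (1 / ν) := by
      exact mul_le_mul_of_nonneg_left h2 hQ
    calc (P + Q * τ) * Real.exp (-ν * τ)
        = P * Real.exp (-ν * τ) + Q * (τ * Real.exp (-ν * τ)) := by ring
      _ ≤ P + Q * (1 / ν) := by linarith
      _ = P + Q / ν := by ring
  -- Step 1: global boundedness
  obtain ⟨P₀, Q₀, hP₀, hQ₀, hest₀⟩ := hME t₀ le_rfl
  set A : ℝ := P₀ + Q₀ / ν with hAdef
  have hA0 : 0 ≤ A := by
    have : 0 ≤ Q₀ / ν := div_nonneg hQ₀ hν.le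
    rw [hAdef]; linarith
  set B : ℝ := max M (A / (1 - q)) with hBdef
  have hMB : M ≤ B := le_max_left _ _
  have hbdd : ∀ t, |x t| ≤ B := by
    intro t
    rcases le_or_gt t t₀ with ht | ht
    · exact (hMx t ht).trans hMB
    · obtain ⟨z, hz, hzmax⟩ := isCompact_Icc.exists_isMaxOn
        (Set.nonempty_Icc.2 ht.le) ((continuous_abs.comp hxc)).continuousOn
      set S : ℝ := |x z| with hSdef
      have hSb : ∀ s ∈ Set.Icc t₀ t, |x s| ≤ S := fun s hs => hzmax hs
      have hcS : ∀ s ∈ Set.Icc t₀ z, C * |x (g s)| ≤ C * max M S := by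
        intro s hs
        refine mul_le_mul_of_nonneg_left ?_ hC
        rcases le_or_gt (g s) t₀ with hgs | hgs
        · exact (hMx _ hgs).trans (le_max_left _ _)
        · refine (hSb (g s) ⟨hgs.le, (hgle s).trans (hs.2.trans hz.2)⟩).trans (le_max_right _ _)
      have hz2 := hest₀ z hz.1 (C * max M S) (mul_nonneg hC (le_max_of_le_left hM))
        hcS
      have hz3 : S ≤ A + q * max M S := by
        have hpre := hdecaybd P₀ Q₀ hP₀ hQ₀ (z - t₀) (by linarith [hz.1])
        have : K * (C * max M S) = q * max M S := by rw [hqdef]; ring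
        rw [this] at hz2
        rw [hAdef]
        linarith
      have hxtS : |x t| ≤ S := hSb t ⟨ht.le, le_rfl⟩
      rcases le_or_gt S M with hSM | hSM
      · exact hxtS.trans (hSM.trans hMB)
      · rw [max_eq_right hSM.le] at hz3
        have : S ≤ A / (1 - q) := by
          rw [le_div_iff₀ hq1]
          nlinarith
        exact hxtS.trans (this.trans (le_max_right _ _))
  -- Step 2: limsup argument
  set h : ℝ → ℝ := fun t => |x t| with hhdef
  have hbb : IsBoundedUnder (· ≤ ·) atTop h := Filter.isBoundedUnder_of ⟨B, fun t => hbdd t⟩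
  have hcb : IsBoundedUnder (· ≥ ·) atTop h := Filter.isBoundedUnder_of ⟨0, fun t => abs_nonneg (x t)⟩
  set L : ℝ := limsup h atTop with hLdef
  have hL0 : 0 ≤ L :=
    le_limsup_of_frequently_le (Filter.Frequently.of_forall fun t => abs_nonneg _) hbb
  have hkey : ∀ ε : ℝ, 0 < ε → L ≤ q * (L + ε) := by
    intro ε hε
    have h1 : ∀ᶠ t in atTop, h t < L + ε := eventually_lt_of_limsup_lt (by linarith) hbb
    have h2 : ∀ᶠ s in atTop, h (g s) < L + ε := hgtend.eventually h1
    obtain ⟨T₁, hT₁⟩ := eventually_atTop.1 h2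
    set T : ℝ := max T₁ t₀ with hTdef
    obtain ⟨P, Q, hP, hQ, hest⟩ := hME T (le_max_right _ _)
    have hLε : 0 ≤ L + ε := by linarith
    have hb2 : ∀ t ≥ T, h t ≤ (P + Q * (t - T)) * Real.exp (-ν * (t - T)) + K * (C * (L + ε)) := by
      intro t ht
      refine hest t ht _ (mul_nonneg hC hLε) ?_
      intro s hs
      refine mul_le_mul_of_nonneg_left ?_ hC
      exact (hT₁ s ((le_max_left _ _).trans hs.1)).le
    -- the decaying term tends to 0
    have htt : Tendsto (fun t : ℝ => ν * (t - T)) atTop atTop := by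
      apply Tendsto.const_mul_atTop hν
      exact tendsto_atTop_add_const_right atTop (-T) tendsto_id
    have d1 : Tendsto (fun t : ℝ => Real.exp (-(ν * (t - T)))) atTop (nhds 0) :=
      Real.tendsto_exp_atBot.comp (tendsto_neg_atTop_atBot.comp htt)
    have d2 : Tendsto (fun t : ℝ => (ν * (t - T)) * Real.exp (-(ν * (t - T)))) atTop (nhds 0) := by
      have := (Real.tendsto_pow_mul_exp_neg_atTop_nhds_zero 1).comp htt
      simpa [Function.comp_def] using this
    have hdec : Tendsto (fun t : ℝ => (P + Q * (t - T)) * Real.exp (-ν * (t - T))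
        + K * (C * (L + ε))) atTop (nhds (0 + K * (C * (L + ε)))) := by
      refine Tendsto.add ?_ tendsto_const_nhds
      have e : ∀ t : ℝ, (P + Q * (t - T)) * Real.exp (-ν * (t - T))
          = P * Real.exp (-(ν * (t - T))) + (Q / ν) * ((ν * (t - T)) * Real.exp (-(ν * (t - T)))) := by
        intro t
        rw [show -ν * (t - T) = -(ν * (t - T)) by ring]
        field_simp
      simp_rw [e]
      have := (d1.const_mul P).add (d2.const_mul (Q / ν))
      simpa using this
    have hlimsup_le : L ≤ K * (C * (L + ε)) := by
      have hle : h ≤ᶠ[atTop] fun t => (P + Q * (t - T)) * Real.exp (-ν * (t - T))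
          + K * (C * (L + ε)) := by
        filter_upwards [eventually_ge_atTop T] with t ht
        exact hb2 t ht
      have := limsup_le_limsup hle hcb.isCoboundedUnder_le hdec.isBoundedUnder_le
      rw [hdec.limsup_eq] at this
      rw [hLdef]
      linarith
    have : K * (C * (L + ε)) = q * (L + ε) := by rw [hqdef]; ring
    linarith [hlimsup_le]
  have hLle : L ≤ 0 := by
    have h4 : ∀ ε : ℝ, 0 < ε → L * (1 - q) ≤ ε := by
      intro ε hε
      have hq1' : 0 < q + 1 := by linarith
      have := hkey (ε / (q + 1)) (by positivity)
      have h5 : q * (ε / (q + 1)) ≤ ε := by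
        rw [mul_div_assoc']
        rw [div_le_iff₀ hq1']
        nlinarith
      nlinarith
    by_contra hcon
    push_neg at hcon
    have := h4 (L * (1 - q) / 2) (by positivity)
    nlinarith
  have hL : L = 0 := le_antisymm hLle hL0
  have hliminf : liminf h atTop = 0 := by
    refine le_antisymm ?_ ?_
    · have := liminf_le_limsup (f := atTop) (u := h) hbb hcb
      rw [← hLdef, hL] at this
      exact this
    · exact le_liminf_of_le hbb.isCoboundedUnder_ge
        (Filter.Eventually.of_forall fun t => abs_nonneg _)
  have htendh : Tendsto h atTop (nhds 0) :=
    tendsto_of_liminf_eq_limsup hliminf hL hbb hcb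
  have hneg : Tendsto (fun t => -h t) atTop (nhds 0) := by
    simpa using htendh.neg
  refine tendsto_of_tendsto_of_tendsto_of_le_of_le hneg htendh ?_ ?_
  · intro t
    exact neg_abs_le _
  · intro t
    exact le_abs_self _

/-- Example 3: global asymptotic stability of the zero equilibrium of
ẍ(t) + a·ẋ(t) + b·x(t) = d(t)·|x(g(t))|^{m+1}/(1 + |x(g(t))|^n) with C = μ·d₀. -/
theorem controlled_hill_type_equation_stability
    (t₀ a b m n d₀ μ C : ℝ)
    (d : ℝ → ℝ) (g : ℝ → ℝ)
    (hdmeas : Measurable d) (hd : ∀ t, |d t| ≤ d₀)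
    (hgmeas : Measurable g) (hgle : ∀ t, g t ≤ t) (hgtend : Tendsto g atTop atTop)
    (ha : 0 < a) (hb : 0 < b) (hm : 0 ≤ m) (hmn : m < n)
    (hμ : μ = if m = 0 then (1:ℝ) else m ^ (m / n) / (n * (n - m) ^ (m / n - 1)))
    (hC : C = μ * d₀)
    (hcond :
      (C < b ∧ b ≤ a ^ 2 / 4 ∧ ∃ τ > (0:ℝ), ∀ t, t - g t ≤ τ) ∨
      (a ^ 2 / 4 ≤ b ∧ b < a ^ 2 / 2 - C ∧ ∃ τ > (0:ℝ), ∀ t, t - g t ≤ τ) ∨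
      (4 * b > a ^ 2 ∧ C < a * Real.sqrt (4 * b - a ^ 2) / 4))
    (x x' x'' : ℝ → ℝ)
    (hx' : ∀ t, HasDerivAt x (x' t) t) (hx'' : ∀ t, HasDerivAt x' (x'' t) t)
    (hinit : ∃ M : ℝ, ∀ t ≤ t₀, |x t| ≤ M ∧ |x' t| ≤ M)
    (heq : ∀ t ≥ t₀, x'' t + a * x' t + b * x t
        = d t * |x (g t)| ^ (m + 1) / (1 + |x (g t)| ^ n)) :
    Tendsto x atTop (nhds 0) := by
  -- basic positivity facts
  have hn : 0 < n := lt_of_le_of_lt hm hmn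
  have hd₀ : 0 ≤ d₀ := (abs_nonneg (d 0)).trans (hd 0)
  have hμpos : 0 < μ := by
    rw [hμ]
    split_ifs with h
    · norm_num
    · have hmpos : 0 < m := lt_of_le_of_ne hm (Ne.symm h)
      have hnm : 0 < n - m := by linarith
      positivity
  have hC0 : 0 ≤ C := by rw [hC]; exact mul_nonneg hμpos.le hd₀
  -- continuity / measurability
  have hxc : Continuous x := continuous_iff_continuousAt.2 fun t => (hx' t).continuousAt
  have habsm : Measurable (fun s => |x (g s)|) := (hxc.measurable.comp hgmeas).abs
  set f₀ : ℝ → ℝ := fun s => d s * |x (g s)| ^ (m + 1) / (1 + |x (g s)| ^ n) with hf₀def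
  have hf₀m : Measurable f₀ := by
    apply Measurable.div
    · exact hdmeas.mul
        (((Real.continuous_rpow_const (by linarith : (0:ℝ) ≤ m + 1)).measurable).comp habsm)
    · exact measurable_const.add
        (((Real.continuous_rpow_const hn.le).measurable).comp habsm)
  have hf₀b : ∀ s, |f₀ s| ≤ C * |x (g s)| := by
    intro s
    set u : ℝ := |x (g s)| with hudef
    have hu : 0 ≤ u := abs_nonneg _
    have hA : 0 ≤ u ^ (m + 1) := Real.rpow_nonneg hu _
    have hBn : 0 ≤ u ^ n := Real.rpow_nonneg hu _
    have hB : (0:ℝ) < 1 + u ^ n := by linarith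
    have e : |f₀ s| = |d s| * (u ^ (m + 1) / (1 + u ^ n)) := by
      rw [hf₀def]
      rw [abs_div, abs_mul, abs_of_nonneg hA, abs_of_pos hB]
      ring
    rw [e]
    calc |d s| * (u ^ (m + 1) / (1 + u ^ n)) ≤ d₀ * (u ^ (m + 1) / (1 + u ^ n)) :=
          mul_le_mul_of_nonneg_right (hd s) (div_nonneg hA hB.le)
      _ ≤ d₀ * (μ * u) :=
          mul_le_mul_of_nonneg_left (hill_bound' m n μ hm hmn hμ u hu) hd₀
      _ = C * u := by rw [hC]; ring
  set f : ℝ → ℂ := fun s => ((f₀ s : ℝ) : ℂ) with hfdef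
  have hfm : Measurable f := Complex.measurable_ofReal.comp hf₀m
  have hfnorm : ∀ s, ‖f s‖ = |f₀ s| := by
    intro s
    rw [hfdef]
    simp [Complex.norm_real]
  -- local boundedness of x
  obtain ⟨M₀, hM₀⟩ := hinit
  set M : ℝ := max M₀ 0 with hMdef
  have hM : 0 ≤ M := le_max_right _ _
  have hMx : ∀ t ≤ t₀, |x t| ≤ M := fun t ht => ((hM₀ t ht).1).trans (le_max_left _ _)
  have hloc : ∀ r : ℝ, ∃ Bl : ℝ, 0 ≤ Bl ∧ ∀ s ≤ r, |x s| ≤ Bl := by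
    intro r
    rcases le_total r t₀ with h | h
    · exact ⟨M, hM, fun s hs => hMx s (hs.trans h)⟩
    · obtain ⟨z, hz, hzmax⟩ := isCompact_Icc.exists_isMaxOn (Set.nonempty_Icc.2 h)
        ((continuous_abs.comp hxc)).continuousOn
      refine ⟨max M (|x z|), le_max_of_le_left hM, fun s hs => ?_⟩
      rcases le_total s t₀ with h2 | h2
      · exact (hMx s h2).trans (le_max_left _ _)
      · exact le_max_of_le_right (hzmax ⟨h2, hs⟩)
  have hfi : ∀ p q : ℝ, IntervalIntegrable f volume p q := by
    intro p q
    obtain ⟨Bl, hBl0, hBl⟩ := hloc (max p q)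
    have key : ∀ p' q' : ℝ, p' ≤ max p q → q' ≤ max p q → IntegrableOn f (Set.Ioc p' q') := by
      intro p' q' _ hq'
      refine Measure.integrableOn_of_bounded (measure_Ioc_lt_top).ne
        hfm.aestronglyMeasurable (M := C * Bl) ?_
      refine (ae_restrict_iff' measurableSet_Ioc).2 (Filter.Eventually.of_forall fun s hs => ?_)
      rw [hfnorm]
      refine (hf₀b s).trans ?_
      refine mul_le_mul_of_nonneg_left ?_ hC0
      exact hBl (g s) ((hgle s).trans (hs.2.trans hq'))
    constructor
    · exact key p q (le_max_left _ _) (le_max_right _ _)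
    · exact key q p (le_max_right _ _) (le_max_left _ _)
  -- complexifications
  set X : ℝ → ℂ := fun s => ((x s : ℝ) : ℂ) with hXdef
  set V : ℝ → ℂ := fun s => ((x' s : ℝ) : ℂ) with hVdef
  have hX : ∀ s, HasDerivAt X (V s) s := fun s => (hx' s).ofReal_comp
  have hVheq : ∀ s, t₀ ≤ s → HasDerivAt V (-(a:ℂ) * V s - (b:ℂ) * X s + f s) s := by
    intro s hs
    have h := (hx'' s).ofReal_comp
    have e : ((x'' s : ℝ) : ℂ) = -(a:ℂ) * V s - (b:ℂ) * X s + f s := by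
      have h2 := heq s hs
      have h3 : x'' s = f₀ s - a * x' s - b * x s := by
        rw [hf₀def]
        simp only []
        linarith [h2]
      rw [h3, hVdef, hXdef, hfdef]
      push_cast
      ring
    exact e ▸ h
  have hXnorm : ∀ s, ‖X s‖ = |x s| := by
    intro s
    rw [hXdef]
    simp [Complex.norm_real]
  -- master estimate via ME1 roots data
  have mkME1 : ∀ (lam1 lam2 : ℂ) (m1 m2 : ℝ),
      lam1 + lam2 = -(a:ℂ) → lam1 * lam2 = (b:ℂ) → lam1.re = -m1 → lam2.re = -m2 →
      0 < m1 → 0 < m2 → C < m1 * m2 →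
      ∃ K ν : ℝ, 0 ≤ K ∧ 0 < ν ∧ C * K < 1 ∧
        (∀ T, t₀ ≤ T → ∃ P Q : ℝ, 0 ≤ P ∧ 0 ≤ Q ∧ ∀ t, T ≤ t → ∀ c, 0 ≤ c →
          (∀ s ∈ Set.Icc T t, C * |x (g s)| ≤ c) →
          |x t| ≤ (P + Q * (t - T)) * Real.exp (-ν * (t - T)) + K * c) := by
    intro lam1 lam2 m1 m2 hsum hprod hre1 hre2 hm1 hm2 hCm
    refine ⟨1 / (m1 * m2), min m1 m2, by positivity, lt_min hm1 hm2, ?_, ?_⟩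
    · rw [mul_one_div, div_lt_one (by positivity)]
      exact hCm
    · intro T hT
      refine ⟨‖X T‖, ‖V T - lam2 * X T‖, norm_nonneg _, norm_nonneg _, ?_⟩
      intro t ht c hc hcb
      have hVd : ∀ s ∈ Set.Icc T t,
          HasDerivAt V (-(a:ℂ) * V s - (b:ℂ) * X s + f s) s :=
        fun s hs => hVheq s (hT.trans hs.1)
      have hfb : ∀ s ∈ Set.Icc T t, ‖f s‖ ≤ c := by
        intro s hs
        rw [hfnorm]
        exact (hf₀b s).trans (hcb s hs)
      have hXt := ME1 a b lam1 lam2 m1 m2 hsum hprod hre1 hre2 hm1 hm2 X V f hX hfi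
        T t ht hVd c hc hfb
      rw [hXnorm t] at hXt
      have e : c / (m1 * m2) = 1 / (m1 * m2) * c := by ring
      rw [e] at hXt
      exact hXt
  -- reduce the hypothesis to three clean cases
  have hcond' : (C < b ∧ b ≤ a^2/4) ∨ (a^2/4 < b ∧ C < a^2/4) ∨
      (4*b > a^2 ∧ C < a * Real.sqrt (4*b - a^2) / 4) := by
    rcases hcond with ⟨h1, h2, -⟩ | ⟨h1, h2, -⟩ | h
    · exact Or.inl ⟨h1, h2⟩
    · rcases le_or_gt b (a^2/4) with h3 | h3
      · exact Or.inl ⟨by linarith, h3⟩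
      · exact Or.inr (Or.inl ⟨h3, by linarith⟩)
    · exact Or.inr (Or.inr h)
  have main : ∃ K ν : ℝ, 0 ≤ K ∧ 0 < ν ∧ C * K < 1 ∧
      (∀ T, t₀ ≤ T → ∃ P Q : ℝ, 0 ≤ P ∧ 0 ≤ Q ∧ ∀ t, T ≤ t → ∀ c, 0 ≤ c →
        (∀ s ∈ Set.Icc T t, C * |x (g s)| ≤ c) →
        |x t| ≤ (P + Q * (t - T)) * Real.exp (-ν * (t - T)) + K * c) := by
    rcases hcond' with ⟨hCb, hba⟩ | ⟨hab, hCq⟩ | ⟨hgt, hCc⟩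
    · -- real roots
      have hD : 0 ≤ a^2 - 4*b := by linarith
      set β : ℝ := Real.sqrt (a^2 - 4*b) with hβdef
      have hβnn : 0 ≤ β := Real.sqrt_nonneg _
      have hβ2 : β^2 = a^2 - 4*b := Real.sq_sqrt hD
      have hβa : β < a := by nlinarith
      refine mkME1 (((-a+β)/2 : ℝ) : ℂ) (((-a-β)/2 : ℝ) : ℂ) ((a-β)/2) ((a+β)/2)
        ?_ ?_ ?_ ?_ (by linarith) (by linarith) ?_
      · push_cast; ring
      · rw [← Complex.ofReal_mul]
        norm_cast
        nlinarith
      · simp; ring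
      · simp; ring
      · nlinarith
    · -- complex roots, ME1 route
      have h4b : 0 < 4*b - a^2 := by linarith
      set ω : ℝ := Real.sqrt (4*b - a^2) / 2 with hωdef
      have hωpos : 0 < ω := by
        rw [hωdef]
        have := Real.sqrt_pos.2 h4b
        linarith
      have hω2 : ω^2 = (4*b - a^2)/4 := by
        rw [hωdef, div_pow, Real.sq_sqrt h4b.le]
        norm_num
      refine mkME1 ((-(a/2) : ℂ) + (ω:ℂ) * Complex.I) ((-(a/2) : ℂ) - (ω:ℂ) * Complex.I)
        (a/2) (a/2) ?_ ?_ ?_ ?_ (by linarith) (by linarith) ?_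
      · push_cast; ring
      · have hbr : (b:ℝ) = a^2/4 + ω^2 := by rw [hω2]; ring
        rw [show ((b:ℝ):ℂ) = (((a^2/4 + ω^2 : ℝ)):ℂ) by rw [hbr]]
        push_cast
        linear_combination (-(ω:ℂ)^2) * Complex.I_sq
      · simp
      · simp
      · nlinarith
    · -- complex roots, ME2 route
      have h4b : 0 < 4*b - a^2 := by linarith
      set ω : ℝ := Real.sqrt (4*b - a^2) / 2 with hωdef
      have hωpos : 0 < ω := by
        rw [hωdef]
        have := Real.sqrt_pos.2 h4b
        linarith
      have hω2 : ω^2 = (4*b - a^2)/4 := by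
        rw [hωdef, div_pow, Real.sq_sqrt h4b.le]
        norm_num
      set lam1 : ℂ := (-(a/2) : ℂ) + (ω:ℂ) * Complex.I with hl1
      set lam2 : ℂ := (-(a/2) : ℂ) - (ω:ℂ) * Complex.I with hl2
      have hα : 0 < a/2 := by linarith
      have hsum : lam1 + lam2 = -(a:ℂ) := by rw [hl1, hl2]; push_cast; ring
      have hprod : lam1 * lam2 = (b:ℂ) := by
        have hbr : (b:ℝ) = a^2/4 + ω^2 := by rw [hω2]; ring
        rw [hl1, hl2, show ((b:ℝ):ℂ) = (((a^2/4 + ω^2 : ℝ)):ℂ) by rw [hbr]]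
        push_cast
        linear_combination (-(ω:ℂ)^2) * Complex.I_sq
      have hre1 : lam1.re = -(a/2) := by rw [hl1]; simp
      have hre2 : lam2.re = -(a/2) := by rw [hl2]; simp
      have hdiff : lam1 - lam2 = ((2*ω : ℝ):ℂ) * Complex.I := by
        rw [hl1, hl2]; push_cast; ring
      have hCαω : C < (a/2) * ω := by
        have : (a/2) * ω = a * Real.sqrt (4*b - a^2) / 4 := by
          rw [hωdef]; ring
        linarith [this ▸ hCc]
      refine ⟨1 / ((a/2) * ω), a/2, by positivity, hα, ?_, ?_⟩
      · rw [mul_one_div, div_lt_one (by positivity)]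
        exact hCαω
      · intro T hT
        refine ⟨(‖V T - lam2 * X T‖ + ‖V T - lam1 * X T‖) / (2 * ω), 0,
          by positivity, le_rfl, ?_⟩
        intro t ht c hc hcb
        have hVd : ∀ s ∈ Set.Icc T t,
            HasDerivAt V (-(a:ℂ) * V s - (b:ℂ) * X s + f s) s :=
          fun s hs => hVheq s (hT.trans hs.1)
        have hfb : ∀ s ∈ Set.Icc T t, ‖f s‖ ≤ c := by
          intro s hs
          rw [hfnorm]
          exact (hf₀b s).trans (hcb s hs)
        have hXt := ME2 a b lam1 lam2 (a/2) ω hsum hprod hre1 hre2 hα hωpos hdiff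
          X V f hX hfi T t ht hVd c hc hfb
        rw [hXnorm t] at hXt
        have e : c / ((a/2) * ω) = 1 / ((a/2) * ω) * c := by ring
        rw [e] at hXt
        exact hXt
  obtain ⟨K, ν, hK, hν, hq, hME⟩ := main
  exact wrapup t₀ C K ν hC0 hK hq hν x hxc g hgle hgtend M hM hMx hME
end
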